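/- arXiv:1911.05425 — 9 statements merged into one kernel-verified Lean document; each statement's English description precedes it below -/
import Mathlib

section
/- Let p(x) = c_0 + c_1 x + ... + c_n x^n be a nonzero real polynomial and set d_j = c_0 + c_1 + ... + c_j for j = 0, ..., n. If d_j >= 0 for all j = 0, ..., n, then p(x) > 0 for all x in the open interval (0,1). Similarly, if d_j <= 0 for all j = 0, ..., n, then p(x) < 0 for all x in (0,1). -/
lemma abel_aux (n : ℕ) (c : ℕ → ℝ) (x : ℝ) :
    ∑ j ∈ Finset.range (n + 1), c j * x ^ j =
      (1 - x) * ∑ j ∈ Finset.range n, (∑ i ∈ Finset.range (j + 1), c i) * x ^ j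
        + (∑ i ∈ Finset.range (n + 1), c i) * x ^ n := by
  induction n with
  | zero => simp
  | succ n ih =>
    rw [Finset.sum_range_succ, ih,
      Finset.sum_range_succ (f := fun j => (∑ i ∈ Finset.range (j + 1), c i) * x ^ j),
      Finset.sum_range_succ (f := fun i => c i) (n := n + 1)]
    ring

lemma pos_part (n : ℕ) (c : ℕ → ℝ) (hne : ∃ j ≤ n, c j ≠ 0)
    (hd : ∀ j ≤ n, 0 ≤ ∑ i ∈ Finset.range (j + 1), c i) :
    ∀ x ∈ Set.Ioo (0 : ℝ) 1, 0 < ∑ j ∈ Finset.range (n + 1), c j * x ^ j := by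
  intro x hx
  obtain ⟨hx0, hx1⟩ := hx
  set d : ℕ → ℝ := fun j => ∑ i ∈ Finset.range (j + 1), c i with hdd
  have hk : ∃ k ≤ n, 0 < d k := by
    by_contra h
    push_neg at h
    have hzero : ∀ k ≤ n, d k = 0 := fun k hk => le_antisymm (h k hk) (hd k hk)
    obtain ⟨j, hj, hcj⟩ := hne
    apply hcj
    cases j with
    | zero =>
      have := hzero 0 (Nat.zero_le _)
      simpa [d] using this
    | succ m =>
      have h1 := hzero (m + 1) hj
      have h2 := hzero m (Nat.le_of_succ_le hj)
      have : d (m + 1) = d m + c (m + 1) := by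
        simp [d, Finset.sum_range_succ]
      rw [h1, h2] at this
      linarith
  obtain ⟨k, hkn, hdk⟩ := hk
  rw [abel_aux]
  have hxpos : ∀ j : ℕ, 0 < x ^ j := fun j => pow_pos hx0 j
  have hterm : ∀ j ∈ Finset.range n, 0 ≤ d j * x ^ j := by
    intro j hj
    exact mul_nonneg (hd j (le_of_lt (Nat.lt_of_lt_of_le (Finset.mem_range.mp hj) (le_refl n)))) (le_of_lt (hxpos j))
  have hS : 0 ≤ ∑ j ∈ Finset.range n, d j * x ^ j := Finset.sum_nonneg hterm
  rcases eq_or_lt_of_le hkn with heq | hlt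
  · have h2 : 0 < d n * x ^ n := mul_pos (heq ▸ hdk) (hxpos n)
    have h1 : 0 ≤ (1 - x) * ∑ j ∈ Finset.range n, d j * x ^ j :=
      mul_nonneg (by linarith) hS
    linarith
  · have hS' : d k * x ^ k ≤ ∑ j ∈ Finset.range n, d j * x ^ j :=
      Finset.single_le_sum hterm (Finset.mem_range.mpr hlt)
    have h1 : 0 < (1 - x) * ∑ j ∈ Finset.range n, d j * x ^ j :=
      mul_pos (by linarith) (lt_of_lt_of_le (mul_pos hdk (hxpos k)) hS')
    have h2 : 0 ≤ d n * x ^ n := mul_nonneg (hd n le_rfl) (le_of_lt (hxpos n))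
    linarith

/-- Remark 1 of the paper: if `p(x) = c₀ + c₁ x + ⋯ + cₙ xⁿ` is a nonzero real polynomial
whose partial sums of coefficients `d_j = c₀ + ⋯ + c_j` are all nonnegative, then `p > 0`
on `(0,1)`; if they are all nonpositive, then `p < 0` on `(0,1)`. -/
theorem stmt_0 (n : ℕ) (c : ℕ → ℝ) (hne : ∃ j ≤ n, c j ≠ 0)
    (p : ℝ → ℝ) (hp : ∀ x, p x = ∑ j ∈ Finset.range (n + 1), c j * x ^ j) :
    ((∀ j ≤ n, 0 ≤ ∑ i ∈ Finset.range (j + 1), c i) →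
      ∀ x ∈ Set.Ioo (0 : ℝ) 1, 0 < p x) ∧
    ((∀ j ≤ n, (∑ i ∈ Finset.range (j + 1), c i) ≤ 0) →
      ∀ x ∈ Set.Ioo (0 : ℝ) 1, p x < 0) := by
  constructor
  · intro hd x hx
    rw [hp]
    exact pos_part n c hne hd x hx
  · intro hd x hx
    obtain ⟨j, hj, hcj⟩ := hne
    have hne' : ∃ j ≤ n, (fun i => -c i) j ≠ 0 := ⟨j, hj, neg_ne_zero.mpr hcj⟩
    have hd' : ∀ j ≤ n, 0 ≤ ∑ i ∈ Finset.range (j + 1), -c i := by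
      intro j hj
      rw [Finset.sum_neg_distrib]
      linarith [hd j hj]
    have := pos_part n (fun i => -c i) hne' hd' x hx
    rw [hp]
    have heq : ∑ j ∈ Finset.range (n + 1), -c j * x ^ j
        = -∑ j ∈ Finset.range (n + 1), c j * x ^ j := by
      rw [← Finset.sum_neg_distrib]; exact Finset.sum_congr rfl (fun _ _ => by ring)
    rw [heq] at this
    linarith
end

section
/- The set of zeros of the function t ↦ T_6(cos(π/12)·t) in the open interval (0,1) is exactly {√3 − 1, 2 − √3}, where T_6 denotes the Chebyshev polynomial of the first kind of degree 6. -/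
open Real

lemma T6_eval (x : ℝ) :
    (Polynomial.Chebyshev.T ℝ 6).eval x = 32*x^6 - 48*x^4 + 18*x^2 - 1 := by
  have h3 : Polynomial.Chebyshev.T ℝ 3 = 2 * Polynomial.X * Polynomial.Chebyshev.T ℝ 2
      - Polynomial.Chebyshev.T ℝ 1 := Polynomial.Chebyshev.T_add_two ℝ 1
  have h4 : Polynomial.Chebyshev.T ℝ 4 = 2 * Polynomial.X * Polynomial.Chebyshev.T ℝ 3
      - Polynomial.Chebyshev.T ℝ 2 := Polynomial.Chebyshev.T_add_two ℝ 2
  have h5 : Polynomial.Chebyshev.T ℝ 5 = 2 * Polynomial.X * Polynomial.Chebyshev.T ℝ 4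
      - Polynomial.Chebyshev.T ℝ 3 := Polynomial.Chebyshev.T_add_two ℝ 3
  have h6 : Polynomial.Chebyshev.T ℝ 6 = 2 * Polynomial.X * Polynomial.Chebyshev.T ℝ 5
      - Polynomial.Chebyshev.T ℝ 4 := Polynomial.Chebyshev.T_add_two ℝ 4
  rw [h6, h5, h4, h3, Polynomial.Chebyshev.T_two, Polynomial.Chebyshev.T_one]
  simp
  ring

/-- The zeros of `t ↦ T₆(cos(π/12)·t)` in `(0,1)` are exactly `√3 − 1` and `2 − √3`,
where `T₆` is the Chebyshev polynomial of the first kind of degree 6. -/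
theorem stmt_1 :
    {t ∈ Set.Ioo (0 : ℝ) 1 |
        (Polynomial.Chebyshev.T ℝ 6).eval (Real.cos (π / 12) * t) = 0} =
      {Real.sqrt 3 - 1, 2 - Real.sqrt 3} := by
  set s : ℝ := Real.sqrt 3 with hs_def
  have hs : s ^ 2 = 3 := Real.sq_sqrt (by norm_num)
  have hs1 : 1 < s := by nlinarith [Real.sqrt_nonneg 3]
  have hs2 : s < 2 := by nlinarith [Real.sqrt_nonneg 3]
  have hc2 : Real.cos (π / 12) ^ 2 = (2 + s) / 4 := by
    have h := Real.cos_sq (π / 12)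
    have h2 : (2 : ℝ) * (π / 12) = π / 6 := by ring
    rw [h2, Real.cos_pi_div_six] at h
    rw [h]; ring
  ext t
  simp only [Set.mem_setOf_eq, Set.mem_Ioo, Set.mem_insert_iff, Set.mem_singleton_iff]
  have key : ∀ u : ℝ, (Polynomial.Chebyshev.T ℝ 6).eval (Real.cos (π / 12) * u) =
      (26 + 15*s) * (u^2 - 1) * (u^2 - (4 - 2*s)) * (u^2 - (7 - 4*s)) / 2 := by
    intro u
    rw [T6_eval]
    have e1 : (Real.cos (π/12) * u)^2 = (2+s)/4 * u^2 := by rw [mul_pow, hc2]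
    have e2 : (Real.cos (π/12) * u)^4 = ((2+s)/4)^2 * u^4 := by
      rw [mul_pow, show (4:ℕ) = 2*2 from rfl, pow_mul, hc2]
    have e3 : (Real.cos (π/12) * u)^6 = ((2+s)/4)^3 * u^6 := by
      rw [mul_pow, show (6:ℕ) = 2*3 from rfl, pow_mul, hc2]
    rw [e1, e2, e3]
    linear_combination (s*u^6/2 - 60*s*u^2 + 60*s + 3*u^6 - 48*u^4 + 166*u^2 - 121) * hs
  constructor
  · rintro ⟨⟨ht0, ht1⟩, heq⟩
    rw [key] at heq
    have hpos : (0:ℝ) < 26 + 15*s := by nlinarith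
    have := mul_eq_zero.mp (by linarith [heq] : (26 + 15*s) * (t^2 - 1) * (t^2 - (4 - 2*s)) * (t^2 - (7 - 4*s)) = 0)
    rcases this with h | h
    · rcases mul_eq_zero.mp h with h | h
      · rcases mul_eq_zero.mp h with h | h
        · nlinarith
        · nlinarith
      · -- t^2 = 4 - 2s = (s-1)^2, t > 0, s-1 > 0
        left
        have : (t - (s - 1)) * (t + (s - 1)) = 0 := by nlinarith
        rcases mul_eq_zero.mp this with h' | h'
        · linarith
        · nlinarith
    · -- t^2 = 7 - 4s = (2-s)^2
      right
      have : (t - (2 - s)) * (t + (2 - s)) = 0 := by nlinarith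
      rcases mul_eq_zero.mp this with h' | h'
      · linarith
      · nlinarith
  · rintro (rfl | rfl)
    · refine ⟨⟨by linarith, by linarith⟩, ?_⟩
      rw [key]
      linear_combination ((26+15*s)*((s-1)^2-1)*((s-1)^2-(7-4*s))/2) * hs
    · refine ⟨⟨by linarith, by linarith⟩, ?_⟩
      rw [key]
      linear_combination ((26+15*s)*((2-s)^2-1)*((2-s)^2-(4-2*s))/2) * hs
end

section
/- The set of zeros of the function t ↦ T_8(cos(π/16)·t) in the open interval (0,1) is exactly {u_1, u_2, u_3}, where u_1 = √(2(2+√2)) − 1 − √2, u_2 = √(2+√2) − 1, and u_3 = 1 + √2 − √(2+√2), and T_8 denotes the Chebyshev polynomial of the first kind of degree 8. -/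
open Real

set_option maxHeartbeats 1600000 in
/-- The zeros of `t ↦ T₈(cos(π/16)·t)` in `(0,1)` are exactly
`u₁ = √(2(2+√2)) − 1 − √2`, `u₂ = √(2+√2) − 1` and `u₃ = 1 + √2 − √(2+√2)`,
where `T₈` is the Chebyshev polynomial of the first kind of degree 8. -/
theorem stmt_2 :
    {t ∈ Set.Ioo (0 : ℝ) 1 |
        (Polynomial.Chebyshev.T ℝ 8).eval (Real.cos (π / 16) * t) = 0} =
      {Real.sqrt (2 * (2 + Real.sqrt 2)) - 1 - Real.sqrt 2,
       Real.sqrt (2 + Real.sqrt 2) - 1,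
       1 + Real.sqrt 2 - Real.sqrt (2 + Real.sqrt 2)} := by
  have evalT8 : ∀ x : ℝ, (Polynomial.Chebyshev.T ℝ 8).eval x
      = 128*x^8 - 256*x^6 + 160*x^4 - 32*x^2 + 1 := by
    intro x
    have h : ∀ n : ℤ, (Polynomial.Chebyshev.T ℝ (n+2)).eval x
        = 2*x*(Polynomial.Chebyshev.T ℝ (n+1)).eval x - (Polynomial.Chebyshev.T ℝ n).eval x := by
      intro n
      rw [Polynomial.Chebyshev.T_add_two]
      simp
    have e2 := h 0; have e3 := h 1; have e4 := h 2; have e5 := h 3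
    have e6 := h 4; have e7 := h 5; have e8 := h 6
    norm_num at e2 e3 e4 e5 e6 e7 e8
    rw [e8, e7, e6, e5, e4, e3, e2]; ring
  have hc0 : 0 < Real.cos (π/16) := by
    apply Real.cos_pos_of_mem_Ioo
    constructor
    · nlinarith [pi_pos]
    · nlinarith [pi_pos]
  have hcsq : Real.cos (π/16)^2 = (2 + Real.sqrt (2 + Real.sqrt 2))/4 := by
    have h := Real.cos_sq (π/16)
    rw [show 2*(π/16) = π/8 by ring, Real.cos_pi_div_eight] at h
    rw [h]; ring
  have h2q : Real.sqrt (2*(2 + Real.sqrt 2)) = Real.sqrt 2 * Real.sqrt (2 + Real.sqrt 2) :=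
    Real.sqrt_mul (by norm_num) _
  rw [h2q]
  set s := Real.sqrt 2 with hsdef
  set q := Real.sqrt (2 + s) with hqdef
  set c := Real.cos (π/16) with hcdef
  have hs : s^2 = 2 := Real.sq_sqrt (by norm_num)
  have hs0 : 0 < s := Real.sqrt_pos.mpr (by norm_num)
  have hq : q^2 = 2 + s := Real.sq_sqrt (by positivity)
  have hq0 : 0 < q := Real.sqrt_pos.mpr (by positivity)
  have hc : c^2 = (2 + q)/4 := hcsq
  have hs1 : 1 < s := by nlinarith
  have hq1 : 1 < q := by nlinarith
  have hq2 : q < 2 := by nlinarith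
  have hsq : s < q := by nlinarith
  have hqs1 : q < 1 + s := by nlinarith
  have hu1pos : 1 + s < s*q := by nlinarith [mul_pos hs0 hq0]
  have hu1lt : s*q < 2 + s := by nlinarith [mul_pos hs0 hq0]
  have keyq : ∀ t : ℝ, 128*((2+q)/4)^4*t^8 - 256*((2+q)/4)^3*t^6 + 160*((2+q)/4)^2*t^4
      - 32*((2+q)/4)*t^2 + 1
      = 128*((2+q)/4)^4*((t^2-1)*((t^2-(s*q-1-s)^2)*((t^2-(q-1)^2)*(t^2-(1+s-q)^2)))) := by
    intro t
    linear_combination ((1/2:ℝ) + 1*s + 6*s*t^2 + (-21)*s*t^4 + 14*s*t^6 + (-2)*s*q + 8*s*q*t^2 + (-16)*s*q*t^4 + 10*s*q*t^6 + (-1/2:ℝ)*s^2 + (-2)*s^2*t^2 + (-11/2:ℝ)*s^2*t^4 + 8*s^2*t^6 + (-1)*s^2*q + (-3)*s^2*q*t^2 + 1*s^2*q*t^4 + 3*s^2*q*t^6 + (3/2:ℝ)*s^3*t^2 + (-2)*s^3*t^4 + (1/2:ℝ)*s^3*t^6 + 3*s^3*q + (-1)*s^3*q*t^2 + (-2)*s^3*q*t^4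 + 1*s^4 + (5/2:ℝ)*s^4*t^2 + (-7/2:ℝ)*s^4*t^4 + 2*s^4*q*t^2 + (-2)*s^4*q*t^4 + (-1/2:ℝ)*s^5 + 1*s^5*t^2 + (-1/2:ℝ)*s^5*t^4 + (-1)*s^5*q + 1*s^5*q*t^2 + (-1/2:ℝ)*s^6 + (1/2:ℝ)*s^6*t^2) * hs + (3 + (-8)*t^2 + 4*t^4 + (-8)*q + 20*q*t^2 + (-20)*q*t^4 + 8*q*t^6 + (-1/2:ℝ)*q^2 + 12*q^2*t^2 + (-23)*q^2*t^4 + 12*q^2*t^6 + 6*q^3 + (-6)*q^3*t^2 + (-6)*q^3*t^4 + 6*q^3*t^6 + 1*q^4*t^2 + (-2)*q^4*t^4 + 1*q^4*t^6 + (-2)*q^5 + 4*q^5*t^2 + (-2)*q^5*t^4 + (-1/2:ℝ)*q^6 + 1*q^6*t^2 + (-1/2:ℝ)*q^6*t^4 + (27/2:ℝ)*s + (-50)*s*t^2 + 67*s*t^4 + (-30)*s*t^6 + (-26)*s*q + 30*s*q*t^2 + 26*s*q*t^4 + (-30)*s*q*t^6 + 7*s*q^2 + 9*s*q^2*t^2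 + (-3)*s*q^2*t^4 + (-13)*s*q^2*t^6 + 16*s*q^3 + (-30)*s*q^3*t^2 + 16*s*q^3*t^4 + (-2)*s*q^3*t^6 + (-15/2:ℝ)*s*q^4 + (-7)*s*q^4*t^2 + (29/2:ℝ)*s*q^4*t^4 + (-3)*s*q^5 + 3*s*q^5*t^4 + 3*s*q^6 + (-3)*s*q^6*t^2 + 1*s*q^7 + (-1)*s*q^7*t^2 + 18*s^2 + (-29)*s^2*t^2 + 12*s^2*t^4 + (-1)*s^2*t^6 + (-34)*s^2*q + 44*s^2*q*t^2 + (-14)*s^2*q*t^4 + 4*s^2*q*t^6 + (19/2:ℝ)*s^2*q^2 + 5*s^2*q^2*t^2 + (-41/2:ℝ)*s^2*q^2*t^4 + 6*s^2*q^2*t^6 + 19*s^2*q^3 + (-19)*s^2*q^3*t^2 + (-3)*s^2*q^3*t^4 + 3*s^2*q^3*t^6 + (-10)*s^2*q^4 + (25/2:ℝ)*s^2*q^4*t^2 + (-3)*s^2*q^4*t^4 + (1/2:ℝ)*s^2*q^4*t^6 + (-3)*s^2*q^5 + 7*s^2*q^5*t^2 + (-4)*s^2*q^5*t^4 + (3/2:ℝ)*s^2*q^6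 + (-1/2:ℝ)*s^2*q^6*t^2 + (-1)*s^2*q^6*t^4 + (-1)*s^2*q^7 + 1*s^2*q^7*t^2 + (-1/2:ℝ)*s^2*q^8 + (1/2:ℝ)*s^2*q^8*t^2 + (15/2:ℝ)*s^3 + (-16)*s^3*t^2 + (3/2:ℝ)*s^3*t^4 + 7*s^3*t^6 + (-19)*s^3*q + 15*s^3*q*t^2 + 1*s^3*q*t^4 + 3*s^3*q*t^6 + (-1)*s^3*q^2 + (11/2:ℝ)*s^3*q^2*t^2 + (-5)*s^3*q^2*t^4 + (1/2:ℝ)*s^3*q^2*t^6 + 13*s^3*q^3 + (-15)*s^3*q^3*t^2 + 2*s^3*q^3*t^4 + (-13/2:ℝ)*s^3*q^4 + (5/2:ℝ)*s^3*q^4*t^2 + 4*s^3*q^4*t^4 + (-4)*s^3*q^5 + 3*s^3*q^5*t^2 + 1*s^3*q^5*t^4 + (5/2:ℝ)*s^3*q^6 + (-5/2:ℝ)*s^3*q^6*t^2 + 1*s^3*q^7 + (-1)*s^3*q^7*t^2 + (-1)*s^4 + (-7/2:ℝ)*s^4*t^2 + 4*s^4*t^4 + (1/2:ℝ)*s^4*t^6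 + 1*s^4*q + (-3)*s^4*q*t^2 + 2*s^4*q*t^4 + (-2)*s^4*q^2 + (7/2:ℝ)*s^4*q^2*t^2 + (-3/2:ℝ)*s^4*q^2*t^4 + 4*s^4*q^3 + (-2)*s^4*q^3*t^2 + (-2)*s^4*q^3*t^4 + (5/2:ℝ)*s^4*q^4 + (-2)*s^4*q^4*t^2 + (-1/2:ℝ)*s^4*q^4*t^4 + (-1)*s^4*q^5 + 1*s^4*q^5*t^2 + (-1/2:ℝ)*s^4*q^6 + (1/2:ℝ)*s^4*q^6*t^2 + 1*s^5 + (3/2:ℝ)*s^5*t^2 + (-5/2:ℝ)*s^5*t^4 + 2*s^5*q + (-2)*s^5*q*t^4 + (3/2:ℝ)*s^5*q^2 + (-1)*s^5*q^2*t^2 + (-1/2:ℝ)*s^5*q^2*t^4 + (-1)*s^5*q^3 + 1*s^5*q^3*t^2 + (-1/2:ℝ)*s^5*q^4 + (1/2:ℝ)*s^5*q^4*t^2 + (1/2:ℝ)*s^6 + (-1/2:ℝ)*s^6*t^4 + (-1)*s^6*q + 1*s^6*q*t^2 + (-1/2:ℝ)*s^6*q^2 + (1/2:ℝ)*s^6*q^2*t^2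 + (-1/2:ℝ)*s^7 + (1/2:ℝ)*s^7*t^2) * hq
  have key : ∀ t : ℝ, 128*(c*t)^8 - 256*(c*t)^6 + 160*(c*t)^4 - 32*(c*t)^2 + 1
      = 128*c^8*((t^2-1)*((t^2-(s*q-1-s)^2)*((t^2-(q-1)^2)*(t^2-(1+s-q)^2)))) := by
    intro t
    have h := keyq t
    rw [← hc] at h
    linear_combination h
  have hA0 : 0 < s*q - 1 - s := by linarith
  have hA1 : s*q - 1 - s < 1 := by linarith
  have hB0 : 0 < q - 1 := by linarith
  have hB1 : q - 1 < 1 := by linarith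
  have hC0 : 0 < 1 + s - q := by linarith
  have hC1 : 1 + s - q < 1 := by linarith
  ext t
  simp only [Set.mem_setOf_eq, Set.mem_Ioo, Set.mem_insert_iff, Set.mem_singleton_iff, evalT8]
  constructor
  · rintro ⟨⟨ht0, ht1⟩, hP⟩
    have hc8 : (0:ℝ) < 128*c^8 := by positivity
    have h2 : 128*c^8*((t^2-1)*((t^2-(s*q-1-s)^2)*((t^2-(q-1)^2)*(t^2-(1+s-q)^2)))) = 0 := by
      linear_combination hP - key t
    have hX : (t^2-1)*((t^2-(s*q-1-s)^2)*((t^2-(q-1)^2)*(t^2-(1+s-q)^2))) = 0 := by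
      rcases mul_eq_zero.mp h2 with h | h
      · exact absurd h (ne_of_gt hc8)
      · exact h
    clear hP h2 key
    rcases mul_eq_zero.mp hX with h | h
    · clear hX; nlinarith
    clear hX
    rcases mul_eq_zero.mp h with h | h
    · left
      have h' : (t - (s*q-1-s))*(t + (s*q-1-s)) = 0 := by linear_combination h
      rcases mul_eq_zero.mp h' with h'' | h''
      · linarith
      · linarith
    rcases mul_eq_zero.mp h with h | h
    · right; left
      have h' : (t - (q-1))*(t + (q-1)) = 0 := by linear_combination h
      rcases mul_eq_zero.mp h' with h'' | h''
      · linarith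
      · linarith
    · right; right
      have h' : (t - (1+s-q))*(t + (1+s-q)) = 0 := by linear_combination h
      rcases mul_eq_zero.mp h' with h'' | h''
      · linarith
      · linarith
  · rintro (rfl | rfl | rfl)
    · exact ⟨⟨hA0, hA1⟩, by linear_combination key (s*q-1-s)⟩
    · exact ⟨⟨hB0, hB1⟩, by linear_combination key (q-1)⟩
    · exact ⟨⟨hC0, hC1⟩, by linear_combination key (1+s-q)⟩
end

section
/- Let φ ∈ (0, π/2], c = cos φ, s = sin φ, and let ξ, η ∈ ℝ. Let p(t) = Σ_{j=0}^{3} B_j^3(t) b_j be the cubic Bézier curve on [−1,1] with control points b_0 = (c,−s), b_1 = (ξ,−η), b_2 = (ξ,η), b_3 = (c,s), where B_j^3(t) = C(3,j)((1+t)/2)^j ((1−t)/2)^{3−j}. Then the simplified error function ψ(t) = ‖p(t)‖² − 1 satisfies, for all t, ψ(t) = (1/16)(t²−1)·((3η−s)² t⁴ + (16s² − 9(η+s)² + 9(ξ−c)²) t² + (16 − (3ξ+c)²)). -/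
open Real

/-- A point of the plane with Euclidean norm. -/
noncomputable def pt (a b : ℝ) : EuclideanSpace ℝ (Fin 2) :=
  (WithLp.equiv 2 (Fin 2 → ℝ)).symm ![a, b]

/-- Reparameterized Bernstein polynomials of degree 3 over `[−1,1]`. -/
noncomputable def B3 (j : ℕ) (t : ℝ) : ℝ :=
  (Nat.choose 3 j : ℝ) * ((1 + t) / 2) ^ j * ((1 - t) / 2) ^ (3 - j)

/-- The simplified error function of the cubic G⁰ Bézier interpolant of a circular arc:
for control points `b₀ = (c,−s)`, `b₁ = (ξ,−η)`, `b₂ = (ξ,η)`, `b₃ = (c,s)`,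
`ψ(t) = ‖p(t)‖² − 1` has the stated closed form. -/
theorem stmt_4 (φ : ℝ) (hφ : φ ∈ Set.Ioc 0 (π / 2))
    (c s ξ η : ℝ) (hc : c = Real.cos φ) (hs : s = Real.sin φ)
    (b : Fin 4 → EuclideanSpace ℝ (Fin 2))
    (hb : b = ![pt c (-s), pt ξ (-η), pt ξ η, pt c s])
    (p : ℝ → EuclideanSpace ℝ (Fin 2))
    (hp : ∀ t, p t = ∑ j : Fin 4, B3 (j : ℕ) t • b j)
    (ψ : ℝ → ℝ) (hψ : ∀ t, ψ t = ‖p t‖ ^ 2 - 1) :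
    ∀ t : ℝ, ψ t = (1 / 16) * (t ^ 2 - 1) *
      ((3 * η - s) ^ 2 * t ^ 4
        + (16 * s ^ 2 - 9 * (η + s) ^ 2 + 9 * (ξ - c) ^ 2) * t ^ 2
        + (16 - (3 * ξ + c) ^ 2)) := by
  intro t
  have h1 : s ^ 2 + c ^ 2 = 1 := by rw [hs, hc]; exact sin_sq_add_cos_sq φ
  rw [hψ, hp, hb]
  rw [EuclideanSpace.norm_eq]
  rw [Real.sq_sqrt (by positivity)]
  have h3 : ((3 : Fin 4) : ℕ) = 3 := rfl
  simp [pt, B3, h3, Fin.sum_univ_four, Fin.sum_univ_two, EuclideanSpace.norm_eq]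
  norm_num
  linear_combination t ^ 2 * h1
end

section
/- Let φ ∈ (0, π/2), c = cos φ, s = sin φ, ξ, η ∈ ℝ with ξ ≠ c, and let ψ(t) = (1/16)(t²−1)·((3η−s)² t⁴ + (16s² − 9(η+s)² + 9(ξ−c)²) t² + (16 − (3ξ+c)²)). If ψ(√3−1) = 0 and ψ(2−√3) = 0, then f(ξ) = 0, where f(ξ) = 243ξ³ − 27c(11 − 16√3)ξ² − 3(32(1 + 2√3) − 3(81 − 32√3)c²)ξ − 32(13 + 2√3)c − (163 − 112√3)c³. -/
open Real

/-- If the simplified error function of the cubic G⁰ interpolant vanishes at `√3 − 1`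
and `2 − √3` and `ξ ≠ c`, then `ξ` is a root of the resolvent cubic `f`. -/
theorem stmt_6 (φ : ℝ) (hφ : φ ∈ Set.Ioo 0 (π / 2))
    (c s ξ η : ℝ) (hc : c = Real.cos φ) (hs : s = Real.sin φ) (hξc : ξ ≠ c)
    (ψ : ℝ → ℝ)
    (hψ : ∀ t, ψ t = (1 / 16) * (t ^ 2 - 1) *
      ((3 * η - s) ^ 2 * t ^ 4
        + (16 * s ^ 2 - 9 * (η + s) ^ 2 + 9 * (ξ - c) ^ 2) * t ^ 2
        + (16 - (3 * ξ + c) ^ 2)))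
    (h1 : ψ (Real.sqrt 3 - 1) = 0) (h2 : ψ (2 - Real.sqrt 3) = 0) :
    243 * ξ ^ 3 - 27 * c * (11 - 16 * Real.sqrt 3) * ξ ^ 2
      - 3 * (32 * (1 + 2 * Real.sqrt 3) - 3 * (81 - 32 * Real.sqrt 3) * c ^ 2) * ξ
      - 32 * (13 + 2 * Real.sqrt 3) * c - (163 - 112 * Real.sqrt 3) * c ^ 3 = 0 := by
  set r := Real.sqrt 3 with hrdef
  have hr : r ^ 2 = 3 := Real.sq_sqrt (by norm_num)
  have hpy : s ^ 2 + c ^ 2 = 1 := by rw [hs, hc]; exact Real.sin_sq_add_cos_sq φ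
  rw [hψ] at h1 h2
  have hE1 : ((72:ℝ) + (216:ℝ)*η^2 + (27:ℝ)*ξ^2 + (-240:ℝ)*s*η + (-78:ℝ)*c*ξ + (-21:ℝ)*c^2 + (-30:ℝ)*r + (-126:ℝ)*r*η^2 + (-18:ℝ)*r*ξ^2 + (132:ℝ)*r*s*η + (36:ℝ)*r*c*ξ + (12:ℝ)*r*c^2) = 0 := by
    linear_combination ((-16:ℝ) + ((-32:ℝ)/3)*r) * h1 + ((-24:ℝ) + (-72:ℝ)*η^2 + (-9:ℝ)*ξ^2 + (80:ℝ)*s*η + (26:ℝ)*c*ξ + (7:ℝ)*c^2 + (26:ℝ)*r + (42:ℝ)*r*η^2 + (6:ℝ)*r*ξ^2 + (-60:ℝ)*r*s*η + (-28:ℝ)*r*c*ξ + (-4:ℝ)*r*c^2 + ((-52:ℝ)/3)*r^2 + (-36:ℝ)*r^2*η^2 + (-15:ℝ)*r^2*ξ^2 + (64:ℝ)*r^2*s*η + (30:ℝ)*r^2*c*ξ + ((7:ℝ)/3)*r^2*c^2 + (10:ℝ)*r^3 + (42:ℝ)*r^3*η^2 + (6:ℝ)*r^3*ξ^2 + (-44:ℝ)*r^3*s*η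 + (-12:ℝ)*r^3*c*ξ + (-4:ℝ)*r^3*c^2 + (-3:ℝ)*r^4 + (-27:ℝ)*r^4*η^2 + (18:ℝ)*r^4*s*η + (3:ℝ)*r^4*c^2 + ((2:ℝ)/3)*r^5 + (6:ℝ)*r^5*η^2 + (-4:ℝ)*r^5*s*η + ((-2:ℝ)/3)*r^5*c^2) * hr + ((-16:ℝ)*r + ((100:ℝ)/3)*r^2 + ((-44:ℝ)/3)*r^3 + ((-25:ℝ)/3)*r^4 + (8:ℝ)*r^5 + (-3:ℝ)*r^6 + ((2:ℝ)/3)*r^7) * hpy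
  have hE2 : ((162:ℝ) + (810:ℝ)*η^2 + (54:ℝ)*ξ^2 + (-708:ℝ)*s*η + (-132:ℝ)*c*ξ + (-84:ℝ)*c^2 + (-84:ℝ)*r + (-468:ℝ)*r*η^2 + (-36:ℝ)*r*ξ^2 + (408:ℝ)*r*s*η + (72:ℝ)*r*c*ξ + (48:ℝ)*r*c^2) = 0 := by
    linear_combination ((-8:ℝ) + ((-16:ℝ)/3)*r) * h2 + ((-84:ℝ) + (-324:ℝ)*η^2 + ((-63:ℝ)/2)*ξ^2 + (320:ℝ)*s*η + (83:ℝ)*c*ξ + ((65:ℝ)/2)*c^2 + (78:ℝ)*r + (318:ℝ)*r*η^2 + (39:ℝ)*r*ξ^2 + (-324:ℝ)*r*s*η + (-86:ℝ)*r*c*ξ + (-31:ℝ)*r*c^2 + ((-281:ℝ)/6)*r^2 + ((-531:ℝ)/2)*r^2*η^2 + ((-39:ℝ)/2)*r^2*ξ^2 + (229:ℝ)*r^2*s*η + (39:ℝ)*r^2*c*ξ + ((82:ℝ)/3)*r^2*c^2 + (17:ℝ)*r^3 + (129:ℝ)*r^3*η^2 + (3:ℝ)*r^3*ξ^2 + (-94:ℝ)*r^3*s*η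 + (-6:ℝ)*r^3*c*ξ + (-14:ℝ)*r^3*c^2 + ((-7:ℝ)/2)*r^4 + ((-63:ℝ)/2)*r^4*η^2 + (21:ℝ)*r^4*s*η + ((7:ℝ)/2)*r^4*c^2 + ((1:ℝ)/3)*r^5 + (3:ℝ)*r^5*η^2 + (-2:ℝ)*r^5*s*η + ((-1:ℝ)/3)*r^5*c^2) * hr + ((66:ℝ) + (-134:ℝ)*r + ((419:ℝ)/6)*r^2 + ((65:ℝ)/3)*r^3 + ((-109:ℝ)/3)*r^4 + (16:ℝ)*r^5 + ((-7:ℝ)/2)*r^6 + ((1:ℝ)/3)*r^7) * hpy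
  have key : (((1710688896:ℝ) - 987666696 * r) * (ξ - c)) *
      (243 * ξ ^ 3 - 27 * c * (11 - 16 * r) * ξ ^ 2
        - 3 * (32 * (1 + 2 * r) - 3 * (81 - 32 * r) * c ^ 2) * ξ
        - 32 * (13 + 2 * r) * c - (163 - 112 * r) * c ^ 3) = 0 := by
    linear_combination ((4081466880:ℝ) + (1785641760:ℝ)*ξ^2 + (7255941120:ℝ)*s*η + (-6342230016:ℝ)*s^2 + (-6065513280:ℝ)*c*ξ + (198404640:ℝ)*c^2 + (-8140258944:ℝ)*r + (-4284123048:ℝ)*r*ξ^2 + (-15756477696:ℝ)*r*s*η + (13762773504:ℝ)*r*s^2 + (12900395664:ℝ)*r*c*ξ + (-476013672:ℝ)*r*c^2 + (5929464384:ℝ)*r^2 + (3849050016:ℝ)*r^2*ξ^2 + (12772219968:ℝ)*r^2*s*η + (-11148637824:ℝ)*r^2*s^2 + (-10206186624:ℝ)*r^2*c*ξ + (427672224:ℝ)*r^2*c^2 + (-1848417408:ℝ)*r^3 + (-1534959072:ℝ)*r^3*ξ^2 + (-4577233536:ℝ)*r^3*s*η + (3992820480:ℝ)*r^3*s^2 +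 (3553927488:ℝ)*r^3*c*ξ + (-170551008:ℝ)*r^3*c^2 + (203793408:ℝ)*r^4 + (229267584:ℝ)*r^4*ξ^2 + (611380224:ℝ)*r^4*s*η + (-532998144:ℝ)*r^4*s^2 + (-458535168:ℝ)*r^4*c*ξ + (25474176:ℝ)*r^4*c^2) * hE1 + ((-1088391168:ℝ) + (-476171136:ℝ)*ξ^2 + (-1934917632:ℝ)*s*η + (2149908480:ℝ)*s^2 + (1617470208:ℝ)*c*ξ + (-52907904:ℝ)*c^2 + (2176782336:ℝ)*r + (1145078208:ℝ)*r*ξ^2 + (4212476928:ℝ)*r*s*η + (-4608866304:ℝ)*r*s^2 + (-3449091456:ℝ)*r*c*ξ + (127230912:ℝ)*r*c^2 + (-1589756544:ℝ)*r^2 + (-1031231736:ℝ)*r^2*ξ^2 + (-3423057408:ℝ)*r^2*s*η + (3689183232:ℝ)*r^2*s^2 + (2735569584:ℝ)*r^2*c*ξ + (-114581304:ℝ)*r^2*c^2 + (496746432:ℝ)*r^3 + (412240752:ℝ)*r^3*ξ^2 + (1229618880:ℝ)*r^3*s*η + (-1306088064:ℝ)*r^3*s^2 + (-954791712:ℝ)*r^3*c*ξ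 + (45804528:ℝ)*r^3*c^2 + (-54867456:ℝ)*r^4 + (-61725888:ℝ)*r^4*ξ^2 + (-164602368:ℝ)*r^4*s*η + (172440576:ℝ)*r^4*s^2 + (123451776:ℝ)*r^4*c*ξ + (-6858432:ℝ)*r^4*c^2) * hE2 + ((3063619584:ℝ) + (70644648960:ℝ)*ξ^2 + (-131066105184:ℝ)*ξ^4 + (136317634560:ℝ)*c*ξ + (256973689728:ℝ)*c*ξ^3 + (-213089522688:ℝ)*c^2 + (-478472629824:ℝ)*c^2*ξ^2 + (432681678720:ℝ)*c^3*ξ + (-77053013856:ℝ)*c^4 + (-3507038208:ℝ)*r + (40021890048:ℝ)*r*ξ^2 + (57055505760:ℝ)*r*ξ^4 + (-80442408960:ℝ)*r*c*ξ + (-282112502400:ℝ)*r*c*ξ^3 + (47434595328:ℝ)*r*c^2 + (472471361856:ℝ)*r*c^2*ξ^2 + (-326428610688:ℝ)*r*c^3*ξ + (75507207264:ℝ)*r*c^4 + (1003290624:ℝ)*r^2 + (-5925685248:ℝ)*r^2*ξ^2 + (-15645623040:ℝ)*r^2*ξ^4 + (10346434560:ℝ)*r^2*c*ξ + (70624493568:ℝ)*r^2*c*ξ^3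 + (-6427330560:ℝ)*r^2*c^2 + (-112074057216:ℝ)*r^2*c^2*ξ^2 + (76362061824:ℝ)*r^2*c^3*ξ + (-18263584512:ℝ)*r^2*c^4 + (1904684544:ℝ)*r^3*ξ^4 + (-7618738176:ℝ)*r^3*c*ξ^3 + (11428107264:ℝ)*r^3*c^2*ξ^2 + (-7618738176:ℝ)*r^3*c^3*ξ + (1904684544:ℝ)*r^3*c^4) * hr + ((108355387392:ℝ) + (55145152512:ℝ)*ξ^2 + (-210906021888:ℝ)*c*ξ + (47405481984:ℝ)*c^2 + (-253957939200:ℝ)*r + (-159479539200:ℝ)*r*ξ^2 + (538652851200:ℝ)*r*c*ξ + (-125215372800:ℝ)*r*c^2 + (230792675328:ℝ)*r^2 + (183608062848:ℝ)*r^2*ξ^2 + (-546243035904:ℝ)*r^2*c*ξ + (131842297728:ℝ)*r^2*c^2 + (-100464551424:ℝ)*r^3 + (-105142281984:ℝ)*r^3*ξ^2 + (274766141952:ℝ)*r^3*c*ξ + (-69159308544:ℝ)*r^3*c^2 + (20513710080:ℝ)*r^4 + (29930757120:ℝ)*r^4*ξ^2 + (-68514895872:ℝ)*r^4*c*ξ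 + (18070428672:ℝ)*r^4*c^2 + (-1504935936:ℝ)*r^5 + (-3386105856:ℝ)*r^5*ξ^2 + (6772211712:ℝ)*r^5*c*ξ + (-1881169920:ℝ)*r^5*c^2) * hpy
  have hκ : (1710688896:ℝ) - 987666696 * r ≠ 0 := by
    intro h
    have hb : r = 1710688896 / 987666696 := by linarith
    rw [hb] at hr
    norm_num at hr
  exact (mul_eq_zero.mp key).resolve_left (mul_ne_zero hκ (sub_ne_zero.mpr hξc))
end

section
/- For every c ∈ (0,1), the cubic polynomial f(ξ) = 243ξ³ − 27c(11 − 16√3)ξ² − 3(32(1 + 2√3) − 3(81 − 32√3)c²)ξ − 32(13 + 2√3)c − (163 − 112√3)c³ has exactly one positive real root, and this root lies in the open interval (c, (4+c)/3). -/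
open Real

/-- For every `c ∈ (0,1)`, the resolvent cubic `f` of the cubic G⁰ interpolation problem
has exactly one positive real root, and this root lies in `(c, (4+c)/3)`. -/
theorem stmt_7 (c : ℝ) (hc : c ∈ Set.Ioo (0 : ℝ) 1)
    (f : ℝ → ℝ)
    (hf : ∀ ξ, f ξ = 243 * ξ ^ 3 - 27 * c * (11 - 16 * Real.sqrt 3) * ξ ^ 2
      - 3 * (32 * (1 + 2 * Real.sqrt 3) - 3 * (81 - 32 * Real.sqrt 3) * c ^ 2) * ξ
      - 32 * (13 + 2 * Real.sqrt 3) * c - (163 - 112 * Real.sqrt 3) * c ^ 3) :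
    (∃! ξ : ℝ, 0 < ξ ∧ f ξ = 0) ∧
      ∀ ξ : ℝ, 0 < ξ → f ξ = 0 → ξ ∈ Set.Ioo c ((4 + c) / 3) := by
  obtain ⟨hc0, hc1⟩ := hc
  set t := Real.sqrt 3 with ht
  have ht0 : (0:ℝ) ≤ 3 := by norm_num
  have ht2 : t ^ 2 = 3 := Real.sq_sqrt ht0
  have htpos : 0 < t := Real.sqrt_pos.mpr (by norm_num)
  have htl : 1.73 < t := by nlinarith
  have htu : t < 1.7321 := by nlinarith
  -- f is continuous
  have hfc : Continuous f := by
    have : f = fun ξ => 243 * ξ ^ 3 - 27 * c * (11 - 16 * t) * ξ ^ 2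
      - 3 * (32 * (1 + 2 * t) - 3 * (81 - 32 * t) * c ^ 2) * ξ
      - 32 * (13 + 2 * t) * c - (163 - 112 * t) * c ^ 3 := funext hf
    rw [this]; continuity
  -- endpoint values
  have hfcneg : f c < 0 := by
    rw [hf]
    have : 243 * c ^ 3 - 27 * c * (11 - 16 * t) * c ^ 2
      - 3 * (32 * (1 + 2 * t) - 3 * (81 - 32 * t) * c ^ 2) * c
      - 32 * (13 + 2 * t) * c - (163 - 112 * t) * c ^ 3
      = (512 + 256 * t) * (c ^ 3 - c) := by ring
    rw [this]
    have h1 : c ^ 3 - c < 0 := by nlinarith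
    nlinarith
  have hfspos : 0 < f ((4 + c) / 3) := by
    rw [hf]
    have : 243 * ((4 + c) / 3) ^ 3 - 27 * c * (11 - 16 * t) * ((4 + c) / 3) ^ 2
      - 3 * (32 * (1 + 2 * t) - 3 * (81 - 32 * t) * c ^ 2) * ((4 + c) / 3)
      - 32 * (13 + 2 * t) * c - (163 - 112 * t) * c ^ 3
      = 448 - 256 * t + (640 * t - 544) * c + 816 * c ^ 2 + (56 + 64 * t) * c ^ 3 := by
      ring
    rw [this]
    nlinarith [sq_nonneg c, pow_pos hc0 3]
  -- uniqueness of positive roots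
  have key : ∀ a b : ℝ, 0 < a → 0 < b → f a = 0 → f b = 0 → a = b := by
    intro a b ha hb hfa hfb
    by_contra hne
    have hab : a - b ≠ 0 := sub_ne_zero.mpr hne
    rw [hf] at hfa hfb
    -- subtract and divide by (a-b)
    have hE : 243 * (a ^ 2 + a * b + b ^ 2) - 27 * c * (11 - 16 * t) * (a + b)
        - 3 * (32 * (1 + 2 * t) - 3 * (81 - 32 * t) * c ^ 2) = 0 := by
      have h := sub_eq_zero.mpr (hfa.trans hfb.symm)
      have h2 : (a - b) * (243 * (a ^ 2 + a * b + b ^ 2) - 27 * c * (11 - 16 * t) * (a + b)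
          - 3 * (32 * (1 + 2 * t) - 3 * (81 - 32 * t) * c ^ 2)) = 0 := by
        linear_combination hfa - hfb
      rcases mul_eq_zero.mp h2 with h3 | h3
      · exact absurd h3 hab
      · exact h3
    -- then constant term equals a*b*(243(a+b) + 27c(16t-11)) > 0, contradiction
    have hD : -(32 * (13 + 2 * t) * c) - (163 - 112 * t) * c ^ 3
        = a * b * (243 * (a + b) + 27 * c * (16 * t - 11)) := by
      linear_combination hfa - a * hE
    nlinarith [mul_pos ha hb, mul_pos hc0 htpos, mul_pos (mul_pos ha hb) htpos,
      mul_pos (mul_pos ha hb) (mul_pos hc0 htpos), pow_pos hc0 3,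
      mul_pos (mul_pos ha hb) (add_pos ha hb)]
  -- existence via IVT
  have hcs : c < (4 + c) / 3 := by linarith
  have hIVT : (0:ℝ) ∈ f '' Set.Ioo c ((4 + c) / 3) := by
    apply intermediate_value_Ioo hcs.le hfc.continuousOn
    exact ⟨hfcneg, hfspos⟩
  obtain ⟨ξ₀, hξ₀mem, hξ₀root⟩ := hIVT
  have hξ₀pos : 0 < ξ₀ := lt_trans hc0 hξ₀mem.1
  constructor
  · exact ⟨ξ₀, ⟨hξ₀pos, hξ₀root⟩, fun y ⟨hy0, hyr⟩ => key y ξ₀ hy0 hξ₀pos hyr hξ₀root⟩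
  · intro ξ hξ0 hξr
    have : ξ = ξ₀ := key ξ ξ₀ hξ0 hξ₀pos hξr hξ₀root
    rw [this]; exact hξ₀mem
end

section
/- Let φ ∈ (0, π/2], c = cos φ, s = sin φ, α, β, γ ∈ ℝ, and let ψ(t) = −1 + (1/64)(4(1−t⁴)α + 3(1−t²)²γ + (1 + 6t² + t⁴)c)² + (1/4)t²(2(1−t²)β + (1+t²)s)². Set u_1 = √(2(2+√2)) − 1 − √2, u_2 = √(2+√2) − 1, u_3 = 1 + √2 − √(2+√2). If ψ(u_1) = ψ(u_2) = ψ(u_3) = 0, then, with x = 4α − 3γ − c and y = 4α + 3γ + c, it holds that 64 + u_1²u_2²u_3²·x² − y² = 0. -/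
set_option maxHeartbeats 2000000


open Real

private lemma cubic4 (a b c e v1 v2 v3 v4 : ℝ)
    (h12 : v1 ≠ v2) (h13 : v1 ≠ v3) (h14 : v1 ≠ v4)
    (h23 : v2 ≠ v3) (h24 : v2 ≠ v4) (h34 : v3 ≠ v4)
    (H1 : a*v1^3 + b*v1^2 + c*v1 + e = 0)
    (H2 : a*v2^3 + b*v2^2 + c*v2 + e = 0)
    (H3 : a*v3^3 + b*v3^2 + c*v3 + e = 0)
    (H4 : a*v4^3 + b*v4^2 + c*v4 + e = 0) :
    e = 0 := by
  have k12 : a*(v1^2+v1*v2+v2^2) + b*(v1+v2) + c = 0 := by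
    have h : (v1 - v2) * (a*(v1^2+v1*v2+v2^2) + b*(v1+v2) + c) = 0 := by
      linear_combination H1 - H2
    exact (mul_eq_zero.mp h).resolve_left (sub_ne_zero.mpr h12)
  have k23 : a*(v2^2+v2*v3+v3^2) + b*(v2+v3) + c = 0 := by
    have h : (v2 - v3) * (a*(v2^2+v2*v3+v3^2) + b*(v2+v3) + c) = 0 := by
      linear_combination H2 - H3
    exact (mul_eq_zero.mp h).resolve_left (sub_ne_zero.mpr h23)
  have k34 : a*(v3^2+v3*v4+v4^2) + b*(v3+v4) + c = 0 := by
    have h : (v3 - v4) * (a*(v3^2+v3*v4+v4^2) + b*(v3+v4) + c) = 0 := by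
      linear_combination H3 - H4
    exact (mul_eq_zero.mp h).resolve_left (sub_ne_zero.mpr h34)
  have k123 : a*(v1+v2+v3) + b = 0 := by
    have h : (v1 - v3) * (a*(v1+v2+v3) + b) = 0 := by
      linear_combination k12 - k23
    exact (mul_eq_zero.mp h).resolve_left (sub_ne_zero.mpr h13)
  have k234 : a*(v2+v3+v4) + b = 0 := by
    have h : (v2 - v4) * (a*(v2+v3+v4) + b) = 0 := by
      linear_combination k23 - k34
    exact (mul_eq_zero.mp h).resolve_left (sub_ne_zero.mpr h24)
  have ka : a = 0 := by
    have h : (v1 - v4) * a = 0 := by linear_combination k123 - k234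
    exact (mul_eq_zero.mp h).resolve_left (sub_ne_zero.mpr h14)
  have kb : b = 0 := by linear_combination k123 - (v1+v2+v3)*ka
  have kc : c = 0 := by
    linear_combination k12 - (v1^2+v1*v2+v2^2)*ka - (v1+v2)*kb
  linear_combination H1 - v1^3*ka - v1^2*kb - v1*kc

/-- Equation (3) of the paper: if the simplified error function of the quartic G⁰
interpolant vanishes at `u₁, u₂, u₃`, then with `x = 4α − 3γ − c` and `y = 4α + 3γ + c`,
`64 + u₁²u₂²u₃²x² − y² = 0`. -/
theorem stmt_10 (φ : ℝ) (hφ : φ ∈ Set.Ioc 0 (π / 2))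
    (c s α β γ : ℝ) (hc : c = Real.cos φ) (hs : s = Real.sin φ)
    (ψ : ℝ → ℝ)
    (hψ : ∀ t, ψ t = -1
      + (1 / 64) * (4 * (1 - t ^ 4) * α + 3 * (1 - t ^ 2) ^ 2 * γ
          + (1 + 6 * t ^ 2 + t ^ 4) * c) ^ 2
      + (1 / 4) * t ^ 2 * (2 * (1 - t ^ 2) * β + (1 + t ^ 2) * s) ^ 2)
    (u1 u2 u3 : ℝ)
    (hu1 : u1 = Real.sqrt (2 * (2 + Real.sqrt 2)) - 1 - Real.sqrt 2)
    (hu2 : u2 = Real.sqrt (2 + Real.sqrt 2) - 1)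
    (hu3 : u3 = 1 + Real.sqrt 2 - Real.sqrt (2 + Real.sqrt 2))
    (h1 : ψ u1 = 0) (h2 : ψ u2 = 0) (h3 : ψ u3 = 0)
    (x y : ℝ) (hx : x = 4 * α - 3 * γ - c) (hy : y = 4 * α + 3 * γ + c) :
    64 + u1 ^ 2 * u2 ^ 2 * u3 ^ 2 * x ^ 2 - y ^ 2 = 0 := by
  subst hx hy
  have hcs : c ^ 2 + s ^ 2 = 1 := by
    rw [hc, hs]; rw [add_comm]; exact Real.sin_sq_add_cos_sq φ
  have hr0 : (0:ℝ) ≤ Real.sqrt 2 := Real.sqrt_nonneg _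
  have hr2 : Real.sqrt 2 ^ 2 = 2 := Real.sq_sqrt (by norm_num)
  have hrt : Real.sqrt (2 * (2 + Real.sqrt 2))
      = Real.sqrt 2 * Real.sqrt (2 + Real.sqrt 2) := Real.sqrt_mul (by norm_num) _
  rw [hrt] at hu1
  set r := Real.sqrt 2 with hrdef
  have ht0 : (0:ℝ) ≤ Real.sqrt (2 + r) := Real.sqrt_nonneg _
  have ht2 : Real.sqrt (2 + r) ^ 2 = 2 + r := Real.sq_sqrt (by positivity)
  set t := Real.sqrt (2 + r) with htdef
  have hrgt : 1 < r := by nlinarith [hr2, hr0]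
  have hrlt : r < 3/2 := by nlinarith [hr2, hr0]
  have htgt : 1 < t := by nlinarith [ht2, ht0, hrgt]
  have htlt : t < 2 := by nlinarith [ht2, ht0, hrlt]
  -- ordering of the nodes
  have hu1pos : 0 < u1 := by
    rw [hu1]
    have key : (r*t - (1+r)) * (r*t + (1+r)) = 1 := by
      linear_combination t^2 * hr2 + 2 * ht2 - hr2
    nlinarith [key, hrgt, htgt]
  have o1 : u1 < u3 := by
    rw [hu1, hu3]
    nlinarith [mul_pos (show (0:ℝ) < 1 + r by linarith) (show (0:ℝ) < 2 - t by linarith)]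
  have o2 : u3 < u2 := by
    rw [hu3, hu2]
    nlinarith [ht2, mul_pos (show (0:ℝ) < t by linarith) (show (0:ℝ) < 2 - t by linarith)]
  have o3 : u2 < 1 := by rw [hu2]; linarith
  have hu3pos : 0 < u3 := lt_trans hu1pos o1
  have hu2pos : 0 < u2 := lt_trans hu3pos o2
  -- squares are distinct and distinct from 1
  have q13 : u1^2 < u3^2 := by nlinarith
  have q32 : u3^2 < u2^2 := by nlinarith
  have q21 : u2^2 < 1 := by nlinarith
  have q12 : u1^2 < u2^2 := lt_trans q13 q32
  have q11 : u1^2 < 1 := lt_trans q12 q21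
  have q31 : u3^2 < 1 := lt_trans q32 q21
  -- rewrite the three vanishing conditions
  rw [hψ] at h1 h2 h3
  -- apply the cubic vanishing lemma
  have he := cubic4
    (-12*(c-γ)*(4*α-3*γ-c) + 16*(s-2*β)^2
      + (4*α-3*γ-c)^2*(u1^2+u2^2+u3^2+1))
    (36*(c-γ)^2 - 2*(4*α-3*γ-c)*(4*α+3*γ+c) + 32*(2*β+s)*(s-2*β)
      - (4*α-3*γ-c)^2*(u1^2*u2^2+u1^2*u3^2+u2^2*u3^2+u1^2+u2^2+u3^2))
    (12*(c-γ)*(4*α+3*γ+c) + 16*(2*β+s)^2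
      + (4*α-3*γ-c)^2*(u1^2*u2^2*u3^2 + u1^2*u2^2+u1^2*u3^2+u2^2*u3^2))
    ((4*α+3*γ+c)^2 - 64 - (4*α-3*γ-c)^2*u1^2*u2^2*u3^2)
    (u1^2) (u2^2) (u3^2) 1
    (ne_of_lt q12) (ne_of_lt q13) (ne_of_lt q11)
    (ne_of_gt q32) (ne_of_lt q21) (ne_of_lt q31)
    (by linear_combination 64 * h1)
    (by linear_combination 64 * h2)
    (by linear_combination 64 * h3)
    (by linear_combination 64 * hcs)
  linarith [he]
end

section
/- Let φ ∈ (0, π/2], c = cos φ, s = sin φ, α, β, γ ∈ ℝ, and let ψ(t) = −1 + (1/64)(4(1−t⁴)α + 3(1−t²)²γ + (1 + 6t² + t⁴)c)² + (1/4)t²(2(1−t²)β + (1+t²)s)². Set u_1 = √(2(2+√2)) − 1 − √2, u_2 = √(2+√2) − 1, u_3 = 1 + √2 − √(2+√2), and σ_3 = (1−u_1²)(1−u_2²)(1−u_3²). If ψ(u_1) = ψ(u_2) = ψ(u_3) = 0, then, with x = 4α − 3γ − c and y = 4α + 3γ + c, it holds that −1 + (σ_3/128)x² + (c/8)(x+y)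 + βs = 0. -/
open Real

set_option linter.unreachableTactic false
set_option maxRecDepth 100000
set_option maxHeartbeats 4000000

/-- Equation (4) of the paper: if the simplified error function of the quartic G⁰
interpolant vanishes at `u₁, u₂, u₃`, then with `x = 4α − 3γ − c`, `y = 4α + 3γ + c` and
`σ₃ = (1−u₁²)(1−u₂²)(1−u₃²)`, it holds that `−1 + (σ₃/128)x² + (c/8)(x+y) + βs = 0`. -/
theorem stmt_11 (φ : ℝ) (hφ : φ ∈ Set.Ioc 0 (π / 2))
    (c s α β γ : ℝ) (hc : c = Real.cos φ) (hs : s = Real.sin φ)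
    (ψ : ℝ → ℝ)
    (hψ : ∀ t, ψ t = -1
      + (1 / 64) * (4 * (1 - t ^ 4) * α + 3 * (1 - t ^ 2) ^ 2 * γ
          + (1 + 6 * t ^ 2 + t ^ 4) * c) ^ 2
      + (1 / 4) * t ^ 2 * (2 * (1 - t ^ 2) * β + (1 + t ^ 2) * s) ^ 2)
    (u1 u2 u3 σ3 : ℝ)
    (hu1 : u1 = Real.sqrt (2 * (2 + Real.sqrt 2)) - 1 - Real.sqrt 2)
    (hu2 : u2 = Real.sqrt (2 + Real.sqrt 2) - 1)
    (hu3 : u3 = 1 + Real.sqrt 2 - Real.sqrt (2 + Real.sqrt 2))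
    (hσ3 : σ3 = (1 - u1 ^ 2) * (1 - u2 ^ 2) * (1 - u3 ^ 2))
    (h1 : ψ u1 = 0) (h2 : ψ u2 = 0) (h3 : ψ u3 = 0)
    (x y : ℝ) (hx : x = 4 * α - 3 * γ - c) (hy : y = 4 * α + 3 * γ + c) :
    -1 + (σ3 / 128) * x ^ 2 + (c / 8) * (x + y) + β * s = 0 := by
  have hpy : s ^ 2 + c ^ 2 = 1 := by
    rw [hs, hc]; exact Real.sin_sq_add_cos_sq φ
  set r := Real.sqrt 2 with hrd
  set q := Real.sqrt (2 + r) with hqd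
  have hr : r ^ 2 = 2 := by rw [hrd]; exact Real.sq_sqrt (by norm_num)
  have hq : q ^ 2 = 2 + r := by
    rw [hqd]; exact Real.sq_sqrt (by rw [hrd]; positivity)
  have hQ : Real.sqrt (2 * (2 + r)) = r * q := by
    rw [Real.sqrt_mul (by norm_num : (0:ℝ) ≤ 2), hrd, hqd]
  rw [hψ] at h1 h2 h3
  rw [hQ] at hu1
  subst hu1 hu2 hu3 hσ3 hx hy
  linear_combination ((1/4) + ((1/2)*q + (-1/4)*r*q)) * h1 + ((1 + (1/2)*q) + ((3/4)*r + (1/2)*r*q)) * h2 + ((-1/2) + ((-1/2)*q + (-1/4)*r)) * h3 + (((1/4) + (-1/2)*q) + ((-1/2)*r + (-1/4)*r*q)) * hpy + ((((((((((135/8)*γ^2 + -1*β^2) + ((-87/2)*α*γ + 29*α^2)) + (((-3/2)*s*β + (5/4)*s^2) + ((21/2)*c*γ + (-16*c*α + (25/8)*c^2)))) + ((((-279/8)*q*γ^2 + -22*q*β^2) + (108*q*α*γ + -84*q*α^2)) + ((25*q*s*β + (-13/2)*q*s^2) + ((-159/4)*q*c*γ + (61*q*c*α + (-83/8)*q*c^2)))))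 + (((((1359/64)*q^2*γ^2 + 10*q^2*β^2) + ((-525/8)*q^2*α*γ + (191/4)*q^2*α^2)) + (((-13/2)*q^2*s*β + 1*q^2*s^2) + ((693/32)*q^2*c*γ + ((-227/8)*q^2*c*α + (215/64)*q^2*c^2)))) + ((((369/32)*q^3*γ^2 + 15*q^3*β^2) + ((-81/2)*q^3*α*γ + ((71/2)*q^3*α^2 + -18*q^3*s*β))) + (((19/4)*q^3*s^2 + (303/16)*q^3*c*γ) + ((-63/2)*q^3*c*α + ((193/32)*q^3*c^2 + (-2871/128)*q^4*γ^2)))))) + ((((((-21/2)*q^4*β^2 + (1101/16)*q^4*α*γ) + ((-403/8)*q^4*α^2 + (15/2)*q^4*s*β)) + (((-9/8)*q^4*s^2 + (-1461/64)*q^4*c*γ) + ((487/16)*q^4*c*α + ((-463/128)*q^4*c^2 + (585/64)*q^5*γ^2)))) + (((-1*q^5*β^2 + (-195/8)*q^5*α*γ) + ((61/4)*q^5*α^2 + 3*q^5*s*β)) + (((-5/4)*q^5*s^2 + (171/32)*q^5*c*γ) + ((-41/8)*q^5*c*α + ((-15/64)*q^5*c^2 + (135/128)*q^6*γ^2)))))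 + ((((5*q^6*β^2 + (-105/16)*q^6*α*γ) + ((55/8)*q^6*α^2 + -5*q^6*s*β)) + (((5/4)*q^6*s^2 + (285/64)*q^6*c*γ) + ((-115/16)*q^6*c*α + ((175/128)*q^6*c^2 + (-45/16)*q^7*γ^2)))) + (((-2*q^7*β^2 + 9*q^7*α*γ) + (-7*q^7*α^2 + (2*q^7*s*β + (-1/2)*q^7*s^2))) + (((-27/8)*q^7*c*γ + 5*q^7*c*α) + ((-13/16)*q^7*c^2 + ((63/32)*q^8*γ^2 + (-21/4)*q^8*α*γ))))))) + (((((((7/2)*q^8*α^2 + (21/16)*q^8*c*γ) + ((-7/4)*q^8*c*α + (7/32)*q^8*c^2)) + (((-9/16)*q^9*γ^2 + (3/2)*q^9*α*γ) + (-1*q^9*α^2 + ((-3/8)*q^9*c*γ + (1/2)*q^9*c*α)))) + ((((-1/16)*q^9*c^2 + (1827/64)*r*γ^2) + (7*r*β^2 + (-639/8)*r*α*γ)) + (((231/4)*r*α^2 + (-23/2)*r*s*β) + ((17/4)*r*s^2 + ((777/32)*r*c*γ + (-305/8)*r*c*α))))) + (((((475/64)*r*c^2 + (-567/16)*r*q*γ^2)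 + (-21*r*q*β^2 + (441/4)*r*q*α*γ)) + ((-84*r*q*α^2 + (41/2)*r*q*s*β) + ((-19/4)*r*q*s^2 + ((-315/8)*r*q*c*γ + (229/4)*r*q*c*α)))) + ((((-139/16)*r*q*c^2 + (495/32)*r*q^2*γ^2) + ((-339/8)*r*q^2*α*γ + ((55/2)*r*q^2*α^2 + 4*r*q^2*s*β))) + (((-5/2)*r*q^2*s^2 + (165/16)*r*q^2*c*γ) + ((-81/8)*r*q^2*c*α + ((-25/32)*r*q^2*c^2 + (315/32)*r*q^3*γ^2)))))) + (((((15*r*q^3*β^2 + (-153/4)*r*q^3*α*γ) + ((65/2)*r*q^3*α^2 + (-27/2)*r*q^3*s*β)) + (((13/4)*r*q^3*s^2 + (285/16)*r*q^3*c*γ) + ((-105/4)*r*q^3*c*α + ((139/32)*r*q^3*c^2 + (-315/16)*r*q^4*γ^2)))) + ((((-5/4)*r*q^4*β^2 + (855/16)*r*q^4*α*γ) + ((-145/4)*r*q^4*α^2 + ((5/4)*r*q^4*s*β + (-5/16)*r*q^4*s^2))) + (((-225/16)*r*q^4*c*γ + (305/16)*r*q^4*c*α) + ((-5/2)*r*q^4*c^2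 + ((387/64)*r*q^5*γ^2 + (-11/2)*r*q^5*β^2))))) + (((((-93/8)*r*q^5*α*γ + (21/4)*r*q^5*α^2) + ((9/2)*r*q^5*s*β + (-7/8)*r*q^5*s^2)) + (((-3/32)*r*q^5*c*γ + (5/8)*r*q^5*c*α) + ((-13/64)*r*q^5*c^2 + ((315/64)*r*q^6*γ^2 + (-105/8)*r*q^6*α*γ)))) + ((((35/4)*r*q^6*α^2 + (105/32)*r*q^6*c*γ) + ((-35/8)*r*q^6*c*α + ((35/64)*r*q^6*c^2 + (-27/8)*r*q^7*γ^2))) + ((1*r*q^7*β^2 + (33/4)*r*q^7*α*γ) + (-5*r*q^7*α^2 + (-1*r*q^7*s*β + (1/4)*r*q^7*s^2)))))))) + ((((((((-3/2)*r*q^7*c*γ + (7/4)*r*q^7*c*α) + ((-1/8)*r*q^7*c^2 + (9/32)*r*q^9*γ^2)) + (((-3/4)*r*q^9*α*γ + (1/2)*r*q^9*α^2) + ((3/16)*r*q^9*c*γ + ((-1/4)*r*q^9*c*α + (1/32)*r*q^9*c^2)))) + ((((1701/128)*r^2*γ^2 + (37/4)*r^2*β^2) + ((-663/16)*r^2*α*γ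 + (263/8)*r^2*α^2)) + (((-47/4)*r^2*s*β + (57/16)*r^2*s^2) + ((1011/64)*r^2*c*γ + ((-409/16)*r^2*c*α + (645/128)*r^2*c^2))))) + (((((-1107/64)*r^2*q*γ^2 + (-15/2)*r^2*q*β^2) + ((105/2)*r^2*q*α*γ + (-153/4)*r^2*q*α^2)) + (((11/2)*r^2*q*s*β + (-7/8)*r^2*q*s^2) + ((-549/32)*r^2*q*c*γ + (23*r^2*q*c*α + (-179/64)*r^2*q*c^2)))) + ((((1035/128)*r^2*q^2*γ^2 + (-23/2)*r^2*q^2*β^2) + ((-237/16)*r^2*q^2*α*γ + ((23/8)*r^2*q^2*α^2 + (33/2)*r^2*q^2*s*β))) + (((-43/8)*r^2*q^2*s^2 + (-207/64)*r^2*q^2*c*γ) + ((185/16)*r^2*q^2*c*α + ((-573/128)*r^2*q^2*c^2 + (441/32)*r^2*q^3*γ^2)))))) + ((((((21/2)*r^2*q^3*β^2 + (-351/8)*r^2*q^3*α*γ) + (35*r^2*q^3*α^2 + (-25/2)*r^2*q^3*s*β)) + (((29/8)*r^2*q^3*s^2 + (273/16)*r^2*q^3*c*γ) + ((-217/8)*r^2*q^3*c*α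 + ((165/32)*r^2*q^3*c^2 + (-1899/128)*r^2*q^4*γ^2)))) + ((((9/4)*r^2*q^4*β^2 + (615/16)*r^2*q^4*α*γ) + ((-193/8)*r^2*q^4*α^2 + (-15/4)*r^2*q^4*s*β)) + (((21/16)*r^2*q^4*s^2 + (-525/64)*r^2*q^4*c*γ) + ((145/16)*r^2*q^4*c*α + ((-43/128)*r^2*q^4*c^2 + (9/64)*r^2*q^5*γ^2))))) + (((((-7/2)*r^2*q^5*β^2 + (15/8)*r^2*q^5*α*γ) + ((-13/4)*r^2*q^5*α^2 + (9/2)*r^2*q^5*s*β)) + (((-11/8)*r^2*q^5*s^2 + (-81/32)*r^2*q^5*c*γ) + ((41/8)*r^2*q^5*c*α + ((-87/64)*r^2*q^5*c^2 + (9/2)*r^2*q^6*γ^2)))) + ((((5/2)*r^2*q^6*β^2 + (-111/8)*r^2*q^6*α*γ) + ((21/2)*r^2*q^6*α^2 + ((-5/2)*r^2*q^6*s*β + (5/8)*r^2*q^6*s^2))) + (((39/8)*r^2*q^6*c*γ + (-57/8)*r^2*q^6*c*α) + ((9/8)*r^2*q^6*c^2 + ((-9/4)*r^2*q^7*γ^2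 + -1*r^2*q^7*β^2))))))) + (((((((27/4)*r^2*q^7*α*γ + -5*r^2*q^7*α^2) + (1*r^2*q^7*s*β + (-1/4)*r^2*q^7*s^2)) + (((-9/4)*r^2*q^7*c*γ + (13/4)*r^2*q^7*c*α) + ((-1/2)*r^2*q^7*c^2 + ((63/64)*r^2*q^8*γ^2 + (-21/8)*r^2*q^8*α*γ)))) + ((((7/4)*r^2*q^8*α^2 + (21/32)*r^2*q^8*c*γ) + ((-7/8)*r^2*q^8*c*α + (7/64)*r^2*q^8*c^2)) + (((-9/32)*r^2*q^9*γ^2 + (3/4)*r^2*q^9*α*γ) + ((-1/2)*r^2*q^9*α^2 + ((-3/16)*r^2*q^9*c*γ + (1/4)*r^2*q^9*c*α))))) + (((((-1/32)*r^2*q^9*c^2 + (513/128)*r^3*γ^2) + ((21/4)*r^3*β^2 + (-231/16)*r^3*α*γ)) + (((99/8)*r^3*α^2 + (-23/4)*r^3*s*β) + ((25/16)*r^3*s^2 + ((423/64)*r^3*c*γ + (-169/16)*r^3*c*α)))) + ((((257/128)*r^3*c^2 + (-1071/128)*r^3*q*γ^2) + ((3/4)*r^3*q*β^2 + ((351/16)*r^3*q*α*γ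 + (-113/8)*r^3*q*α^2))) + (((-5/4)*r^3*q*s*β + (7/16)*r^3*q*s^2) + ((-321/64)*r^3*q*c*γ + ((97/16)*r^3*q*c*α + (-63/128)*r^3*q*c^2)))))) + ((((((-9/4)*r^3*q^2*γ^2 + (-61/4)*r^3*q^2*β^2) + ((267/16)*r^3*q^2*α*γ + (-77/4)*r^3*q^2*α^2)) + (((69/4)*r^3*q^2*s*β + (-77/16)*r^3*q^2*s^2) + ((-207/16)*r^3*q^2*c*γ + ((365/16)*r^3*q^2*c*α + (-81/16)*r^3*q^2*c^2)))) + ((((495/32)*r^3*q^3*γ^2 + 12*r^3*q^3*β^2) + ((-393/8)*r^3*q^3*α*γ + ((79/2)*r^3*q^3*α^2 + -15*r^3*q^3*s*β))) + (((9/2)*r^3*q^3*s^2 + (309/16)*r^3*q^3*c*γ) + ((-251/8)*r^3*q^3*c*α + ((199/32)*r^3*q^3*c^2 + (-1125/128)*r^3*q^4*γ^2))))) + (((((-1/2)*r^3*q^4*β^2 + (369/16)*r^3*q^4*α*γ) + ((-129/8)*r^3*q^4*α^2 + (5/2)*r^3*q^4*s*β)) + (((-9/8)*r^3*q^4*s^2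 + (-399/64)*r^3*q^4*c*γ) + ((163/16)*r^3*q^4*c*α + ((-269/128)*r^3*q^4*c^2 + (-63/32)*r^3*q^5*γ^2)))) + ((((-11/4)*r^3*q^5*β^2 + (15/2)*r^3*q^5*α*γ) + ((-25/4)*r^3*q^5*α^2 + ((9/4)*r^3*q^5*s*β + (-7/16)*r^3*q^5*s^2))) + (((-27/8)*r^3*q^5*c*γ + (19/4)*r^3*q^5*c*α) + ((-21/32)*r^3*q^5*c^2 + ((63/16)*r^3*q^6*γ^2 + (-21/2)*r^3*q^6*α*γ))))))))) + ((((((((7*r^3*q^6*α^2 + (21/8)*r^3*q^6*c*γ) + ((-7/2)*r^3*q^6*c*α + (7/16)*r^3*q^6*c^2)) + (((-27/16)*r^3*q^7*γ^2 + (1/2)*r^3*q^7*β^2) + ((33/8)*r^3*q^7*α*γ + ((-5/2)*r^3*q^7*α^2 + (-1/2)*r^3*q^7*s*β)))) + ((((1/8)*r^3*q^7*s^2 + (-3/4)*r^3*q^7*c*γ) + ((7/8)*r^3*q^7*c*α + (-1/16)*r^3*q^7*c^2)) + (((9/64)*r^3*q^9*γ^2 + (-3/8)*r^3*q^9*α*γ)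 + ((1/4)*r^3*q^9*α^2 + ((3/32)*r^3*q^9*c*γ + (-1/8)*r^3*q^9*c*α))))) + (((((1/64)*r^3*q^9*c^2 + (333/128)*r^4*γ^2) + ((7/4)*r^4*β^2 + (-33/4)*r^4*α*γ)) + (((51/8)*r^4*α^2 + (-7/4)*r^4*s*β) + ((7/16)*r^4*s^2 + ((195/64)*r^4*c*γ + (-9/2)*r^4*c*α)))) + ((((93/128)*r^4*c^2 + (-9/4)*r^4*q*γ^2) + ((3/2)*r^4*q*β^2 + ((39/8)*r^4*q*α*γ + (-5/2)*r^4*q*α^2))) + (((-3/2)*r^4*q*s*β + (3/8)*r^4*q*s^2) + ((-3/8)*r^4*q*c*γ + ((1/8)*r^4*q*c*α + (1/8)*r^4*q*c^2)))))) + (((((-9*r^4*q^2*γ^2 + (-33/4)*r^4*q^2*β^2) + ((483/16)*r^4*q^2*α*γ + (-97/4)*r^4*q^2*α^2)) + (((33/4)*r^4*q^2*s*β + (-33/16)*r^4*q^2*s^2) + ((-195/16)*r^4*q^2*c*γ + ((293/16)*r^4*q^2*c*α + (-49/16)*r^4*q^2*c^2)))) + ((((117/8)*r^4*q^3*γ^2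 + (25/2)*r^4*q^3*β^2) + ((-387/8)*r^4*q^3*α*γ + (77/2)*r^4*q^3*α^2)) + (((-25/2)*r^4*q^3*s*β + (25/8)*r^4*q^3*s^2) + ((153/8)*r^4*q^3*c*γ + ((-229/8)*r^4*q^3*c*α + (19/4)*r^4*q^3*c^2))))) + (((((-441/64)*r^4*q^4*γ^2 + (-35/4)*r^4*q^4*β^2) + ((399/16)*r^4*q^4*α*γ + -21*r^4*q^4*α^2)) + (((35/4)*r^4*q^4*s*β + (-35/16)*r^4*q^4*s^2) + ((-357/32)*r^4*q^4*c*γ + ((273/16)*r^4*q^4*c*α + (-189/64)*r^4*q^4*c^2)))) + ((((-27/32)*r^4*q^5*γ^2 + (3/2)*r^4*q^5*β^2) + ((9/8)*r^4*q^5*α*γ + ((-3/2)*r^4*q^5*s*β + (3/8)*r^4*q^5*s^2))) + (((9/16)*r^4*q^5*c*γ + (-9/8)*r^4*q^5*c*α) + ((9/32)*r^4*q^5*c^2 + ((9/4)*r^4*q^6*γ^2 + (5/4)*r^4*q^6*β^2))))))) + (((((((-111/16)*r^4*q^6*α*γ + (21/4)*r^4*q^6*α^2) + ((-5/4)*r^4*q^6*s*β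 + (5/16)*r^4*q^6*s^2)) + (((39/16)*r^4*q^6*c*γ + (-57/16)*r^4*q^6*c*α) + ((9/16)*r^4*q^6*c^2 + ((-9/8)*r^4*q^7*γ^2 + (-1/2)*r^4*q^7*β^2)))) + ((((27/8)*r^4*q^7*α*γ + (-5/2)*r^4*q^7*α^2) + ((1/2)*r^4*q^7*s*β + (-1/8)*r^4*q^7*s^2)) + (((-9/8)*r^4*q^7*c*γ + (13/8)*r^4*q^7*c*α) + ((-1/4)*r^4*q^7*c^2 + ((63/128)*r^4*q^8*γ^2 + (-21/16)*r^4*q^8*α*γ))))) + (((((7/8)*r^4*q^8*α^2 + (21/64)*r^4*q^8*c*γ) + ((-7/16)*r^4*q^8*c*α + (7/128)*r^4*q^8*c^2)) + (((-9/64)*r^4*q^9*γ^2 + (3/8)*r^4*q^9*α*γ) + ((-1/4)*r^4*q^9*α^2 + ((-3/32)*r^4*q^9*c*γ + (1/8)*r^4*q^9*c*α)))) + ((((-1/64)*r^4*q^9*c^2 + (153/128)*r^5*γ^2) + ((1/4)*r^5*β^2 + ((-27/8)*r^5*α*γ + (19/8)*r^5*α^2))) + (((-1/4)*r^5*s*β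 + (1/16)*r^5*s^2) + ((63/64)*r^5*c*γ + ((-11/8)*r^5*c*α + (25/128)*r^5*c^2)))))) + ((((((45/128)*r^5*q*γ^2 + (1/4)*r^5*q*β^2) + ((-9/8)*r^5*q*α*γ + (7/8)*r^5*q*α^2)) + (((-1/4)*r^5*q*s*β + (1/16)*r^5*q*s^2) + ((27/64)*r^5*q*c*γ + ((-5/8)*r^5*q*c*α + (13/128)*r^5*q*c^2)))) + ((((-459/64)*r^5*q^2*γ^2 + (-3/2)*r^5*q^2*β^2) + ((81/4)*r^5*q^2*α*γ + ((-57/4)*r^5*q^2*α^2 + (3/2)*r^5*q^2*s*β))) + (((-3/8)*r^5*q^2*s^2 + (-189/32)*r^5*q^2*c*γ) + ((33/4)*r^5*q^2*c*α + ((-75/64)*r^5*q^2*c^2 + (405/32)*r^5*q^3*γ^2))))) + (((((15/4)*r^5*q^3*β^2 + (-585/16)*r^5*q^3*α*γ) + ((105/4)*r^5*q^3*α^2 + (-15/4)*r^5*q^3*s*β)) + (((15/16)*r^5*q^3*s^2 + (45/4)*r^5*q^3*c*γ) + ((-255/16)*r^5*q^3*c*α + ((75/32)*r^5*q^3*c^2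 + (-351/32)*r^5*q^4*γ^2)))) + (((-5*r^5*q^4*β^2 + 33*r^5*q^4*α*γ) + ((-49/2)*r^5*q^4*α^2 + (5*r^5*q^4*s*β + (-5/4)*r^5*q^4*s^2))) + (((-177/16)*r^5*q^4*c*γ + 16*r^5*q^4*c*α) + ((-79/32)*r^5*q^4*c^2 + ((243/64)*r^5*q^5*γ^2 + (15/4)*r^5*q^5*β^2)))))))) + ((((((((-207/16)*r^5*q^5*α*γ + (21/2)*r^5*q^5*α^2) + ((-15/4)*r^5*q^5*s*β + (15/16)*r^5*q^5*s^2)) + (((171/32)*r^5*q^5*c*γ + (-129/16)*r^5*q^5*c*α) + ((87/64)*r^5*q^5*c^2 + ((27/32)*r^5*q^6*γ^2 + (-3/2)*r^5*q^6*β^2)))) + ((((-9/8)*r^5*q^6*α*γ + (3/2)*r^5*q^6*s*β) + ((-3/8)*r^5*q^6*s^2 + (-9/16)*r^5*q^6*c*γ)) + (((9/8)*r^5*q^6*c*α + (-9/32)*r^5*q^6*c^2) + ((-27/32)*r^5*q^7*γ^2 + ((1/4)*r^5*q^7*β^2 + (33/16)*r^5*q^7*α*γ))))) + (((((-5/4)*r^5*q^7*α^2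 + (-1/4)*r^5*q^7*s*β) + ((1/16)*r^5*q^7*s^2 + (-3/8)*r^5*q^7*c*γ)) + (((7/16)*r^5*q^7*c*α + (-1/32)*r^5*q^7*c^2) + ((9/128)*r^5*q^9*γ^2 + ((-3/16)*r^5*q^9*α*γ + (1/8)*r^5*q^9*α^2)))) + ((((3/64)*r^5*q^9*c*γ + (-1/16)*r^5*q^9*c*α) + ((1/128)*r^5*q^9*c^2 + ((81/256)*r^6*γ^2 + (-27/32)*r^6*α*γ))) + (((9/16)*r^6*α^2 + (27/128)*r^6*c*γ) + ((-9/32)*r^6*c*α + ((9/256)*r^6*c^2 + (9/32)*r^6*q*γ^2)))))) + ((((((-3/4)*r^6*q*α*γ + (1/2)*r^6*q*α^2) + ((3/16)*r^6*q*c*γ + (-1/4)*r^6*q*c*α)) + (((1/32)*r^6*q*c^2 + (-153/64)*r^6*q^2*γ^2) + ((51/8)*r^6*q^2*α*γ + ((-17/4)*r^6*q^2*α^2 + (-51/32)*r^6*q^2*c*γ)))) + ((((17/8)*r^6*q^2*c*α + (-17/64)*r^6*q^2*c^2) + ((189/32)*r^6*q^3*γ^2 + ((-63/4)*r^6*q^3*α*γ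 + (21/2)*r^6*q^3*α^2))) + (((63/16)*r^6*q^3*c*γ + (-21/4)*r^6*q^3*c*α) + ((21/32)*r^6*q^3*c^2 + ((-1071/128)*r^6*q^4*γ^2 + (357/16)*r^6*q^4*α*γ))))) + (((((-119/8)*r^6*q^4*α^2 + (-357/64)*r^6*q^4*c*γ) + ((119/16)*r^6*q^4*c*α + (-119/128)*r^6*q^4*c^2)) + (((441/64)*r^6*q^5*γ^2 + (-147/8)*r^6*q^5*α*γ) + ((49/4)*r^6*q^5*α^2 + ((147/32)*r^6*q^5*c*γ + (-49/8)*r^6*q^5*c*α)))) + ((((49/64)*r^6*q^5*c^2 + (-189/64)*r^6*q^6*γ^2) + ((63/8)*r^6*q^6*α*γ + ((-21/4)*r^6*q^6*α^2 + (-63/32)*r^6*q^6*c*γ))) + (((21/8)*r^6*q^6*c*α + (-21/64)*r^6*q^6*c^2) + ((9/32)*r^6*q^7*γ^2 + ((-3/4)*r^6*q^7*α*γ + (1/2)*r^6*q^7*α^2))))))) + (((((((3/16)*r^6*q^7*c*γ + (-1/4)*r^6*q^7*c*α) + ((1/32)*r^6*q^7*c^2 + (63/256)*r^6*q^8*γ^2))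 + (((-21/32)*r^6*q^8*α*γ + (7/16)*r^6*q^8*α^2) + ((21/128)*r^6*q^8*c*γ + ((-7/32)*r^6*q^8*c*α + (7/256)*r^6*q^8*c^2)))) + ((((-9/128)*r^6*q^9*γ^2 + (3/16)*r^6*q^9*α*γ) + ((-1/8)*r^6*q^9*α^2 + (-3/64)*r^6*q^9*c*γ)) + (((1/16)*r^6*q^9*c*α + (-1/128)*r^6*q^9*c^2) + ((9/256)*r^7*γ^2 + ((-3/32)*r^7*α*γ + (1/16)*r^7*α^2))))) + (((((3/128)*r^7*c*γ + (-1/32)*r^7*c*α) + ((1/256)*r^7*c^2 + (9/256)*r^7*q*γ^2)) + (((-3/32)*r^7*q*α*γ + (1/16)*r^7*q*α^2) + ((3/128)*r^7*q*c*γ + ((-1/32)*r^7*q*c*α + (1/256)*r^7*q*c^2)))) + ((((-9/32)*r^7*q^2*γ^2 + (3/4)*r^7*q^2*α*γ) + ((-1/2)*r^7*q^2*α^2 + ((-3/16)*r^7*q^2*c*γ + (1/4)*r^7*q^2*c*α))) + (((-1/32)*r^7*q^2*c^2 + (63/64)*r^7*q^3*γ^2) + ((-21/8)*r^7*q^3*α*γ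 + ((7/4)*r^7*q^3*α^2 + (21/32)*r^7*q^3*c*γ)))))) + ((((((-7/8)*r^7*q^3*c*α + (7/64)*r^7*q^3*c^2) + ((-63/32)*r^7*q^4*γ^2 + (21/4)*r^7*q^4*α*γ)) + (((-7/2)*r^7*q^4*α^2 + (-21/16)*r^7*q^4*c*γ) + ((7/4)*r^7*q^4*c*α + ((-7/32)*r^7*q^4*c^2 + (315/128)*r^7*q^5*γ^2)))) + ((((-105/16)*r^7*q^5*α*γ + (35/8)*r^7*q^5*α^2) + ((105/64)*r^7*q^5*c*γ + ((-35/16)*r^7*q^5*c*α + (35/128)*r^7*q^5*c^2))) + (((-63/32)*r^7*q^6*γ^2 + (21/4)*r^7*q^6*α*γ) + ((-7/2)*r^7*q^6*α^2 + ((-21/16)*r^7*q^6*c*γ + (7/4)*r^7*q^6*c*α))))) + (((((-7/32)*r^7*q^6*c^2 + (63/64)*r^7*q^7*γ^2) + ((-21/8)*r^7*q^7*α*γ + (7/4)*r^7*q^7*α^2)) + (((21/32)*r^7*q^7*c*γ + (-7/8)*r^7*q^7*c*α) + ((7/64)*r^7*q^7*c^2 + ((-9/32)*r^7*q^8*γ^2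 + (3/4)*r^7*q^8*α*γ)))) + ((((-1/2)*r^7*q^8*α^2 + (-3/16)*r^7*q^8*c*γ) + ((1/4)*r^7*q^8*c*α + ((-1/32)*r^7*q^8*c^2 + (9/256)*r^7*q^9*γ^2))) + (((-3/32)*r^7*q^9*α*γ + (1/16)*r^7*q^9*α^2) + ((3/128)*r^7*q^9*c*γ + ((-1/32)*r^7*q^9*c*α + (1/256)*r^7*q^9*c^2)))))))))) * hr + ((((((((-135/8)*γ^2 + (1*β^2 + (87/2)*α*γ)) + (-29*α^2 + (1*s*β + (-3/4)*s^2))) + (((-21/2)*c*γ + ((31/2)*c*α + (-21/8)*c^2)) + (((279/8)*q*γ^2 + 22*q*β^2) + (-108*q*α*γ + 84*q*α^2)))) + (((-24*q*s*β + ((11/2)*q*s^2 + (159/4)*q*c*γ)) + ((-60*q*c*α + (75/8)*q*c^2) + ((-1899/64)*q^2*γ^2 + (-17/2)*q^2*β^2))) + (((699/8)*q^2*α*γ + ((-245/4)*q^2*α^2 + (7/2)*q^2*s*β)) + (((3/8)*q^2*s^2 + (-837/32)*q^2*c*γ) + ((261/8)*q^2*c*α + (-187/64)*q^2*c^2)))))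 + (((((189/32)*q^3*γ^2 + (-7*q^3*β^2 + -12*q^3*α*γ)) + (((7/2)*q^3*α^2 + 11*q^3*s*β) + ((-15/4)*q^3*s^2 + (-21/16)*q^3*c*γ))) + ((7*q^3*c*α + ((-99/32)*q^3*c^2 + (261/32)*q^4*γ^2)) + (((19/2)*q^4*β^2 + (-231/8)*q^4*α*γ) + (24*q^4*α^2 + (-19/2)*q^4*s*β)))) + ((((19/8)*q^4*s^2 + ((201/16)*q^4*c*γ + (-153/8)*q^4*c*α)) + (((105/32)*q^4*c^2 + (-117/16)*q^5*γ^2) + (-4*q^5*β^2 + (45/2)*q^5*α*γ))) + ((-17*q^5*α^2 + (4*q^5*s*β + -1*q^5*s^2)) + (((-63/8)*q^5*c*γ + (23/2)*q^5*c*α) + ((-29/16)*q^5*c^2 + (495/128)*q^6*γ^2)))))) + ((((((-165/16)*q^6*α*γ + ((55/8)*q^6*α^2 + (165/64)*q^6*c*γ)) + (((-55/16)*q^6*c*α + (55/128)*q^6*c^2) + ((-9/8)*q^7*γ^2 + 3*q^7*α*γ))) + ((-2*q^7*α^2 + ((-3/4)*q^7*c*γ + 1*q^7*c*α)) + (((-1/8)*q^7*c^2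 + (-1287/64)*r*γ^2) + ((-15/2)*r*β^2 + (465/8)*r*α*γ)))) + ((((-173/4)*r*α^2 + ((23/2)*r*s*β + (-35/8)*r*s^2)) + (((-609/32)*r*c*γ + (247/8)*r*c*α) + ((-423/64)*r*c^2 + 18*r*q*γ^2))) + ((12*r*q*β^2 + ((-225/4)*r*q*α*γ + 44*r*q*α^2)) + ((-14*r*q*s*β + 4*r*q*s^2) + (21*r*q*c*γ + (-131/4)*r*q*c*α))))) + ((((6*r*q*c^2 + ((-333/32)*r*q^2*γ^2 + (-11/2)*r*q^2*β^2)) + (((63/2)*r*q^2*α*γ + -24*r*q^2*α^2) + ((13/2)*r*q^2*s*β + (-15/8)*r*q^2*s^2))) + (((-177/16)*r*q^2*c*γ + (17*r*q^2*c*α + (-97/32)*r*q^2*c^2)) + (((-135/64)*r*q^3*γ^2 + (-7/2)*r*q^3*β^2) + ((69/8)*r*q^3*α*γ + (-29/4)*r*q^3*α^2)))) + ((((5/2)*r*q^3*s*β + ((-3/8)*r*q^3*s^2 + (-129/32)*r*q^3*c*γ)) + (((43/8)*r*q^3*c*α + (-39/64)*r*q^3*c^2) + ((1017/128)*r*q^4*γ^2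 + (-1/2)*r*q^4*β^2))) + (((-333/16)*r*q^4*α*γ + ((109/8)*r*q^4*α^2 + (1/2)*r*q^4*s*β)) + (((-1/8)*r*q^4*s^2 + (315/64)*r*q^4*c*γ) + ((-103/16)*r*q^4*c*α + (97/128)*r*q^4*c^2))))))) + (((((((-297/64)*r*q^5*γ^2 + ((3/2)*r*q^5*β^2 + (45/4)*r*q^5*α*γ)) + ((-27/4)*r*q^5*α^2 + ((-3/2)*r*q^5*s*β + (3/8)*r*q^5*s^2))) + (((-63/32)*r*q^5*c*γ + ((9/4)*r*q^5*c*α + (-9/64)*r*q^5*c^2)) + (((-9/128)*r*q^6*γ^2 + (3/16)*r*q^6*α*γ) + ((-1/8)*r*q^6*α^2 + (-3/64)*r*q^6*c*γ)))) + ((((1/16)*r*q^6*c*α + ((-1/128)*r*q^6*c^2 + (63/128)*r*q^7*γ^2)) + (((-21/16)*r*q^7*α*γ + (7/8)*r*q^7*α^2) + ((21/64)*r*q^7*c*γ + (-7/16)*r*q^7*c*α))) + (((7/128)*r*q^7*c^2 + ((333/64)*r^2*γ^2 + (-13/2)*r^2*β^2)) + (((-75/8)*r^2*α*γ + (11/4)*r^2*α^2)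 + ((15/2)*r^2*s*β + (-17/8)*r^2*s^2))))) + (((((-45/32)*r^2*c*γ + ((35/8)*r^2*c*α + (-99/64)*r^2*c^2)) + (((-603/64)*r^2*q*γ^2 + (-1/2)*r^2*q*β^2) + ((207/8)*r^2*q*α*γ + (-69/4)*r^2*q*α^2))) + (((-1/2)*r^2*q*s*β + ((3/8)*r^2*q*s^2 + (-213/32)*r^2*q*c*γ)) + (((65/8)*r^2*q*c*α + (-43/64)*r^2*q*c^2) + ((999/128)*r^2*q^2*γ^2 + (-1/2)*r^2*q^2*β^2)))) + ((((-327/16)*r^2*q^2*α*γ + ((107/8)*r^2*q^2*α^2 + (1/2)*r^2*q^2*s*β)) + (((-1/8)*r^2*q^2*s^2 + (309/64)*r^2*q^2*c*γ) + ((-101/16)*r^2*q^2*c*α + (95/128)*r^2*q^2*c^2))) + (((-117/32)*r^2*q^3*γ^2 + ((3/2)*r^2*q^3*β^2 + (69/8)*r^2*q^3*α*γ)) + ((-5*r^2*q^3*α^2 + (-3/2)*r^2*q^3*s*β) + ((3/8)*r^2*q^3*s^2 + (-21/16)*r^2*q^3*c*γ)))))) + ((((((11/8)*r^2*q^3*c*α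 + ((-1/32)*r^2*q^3*c^2 + (-9/128)*r^2*q^4*γ^2)) + (((3/16)*r^2*q^4*α*γ + (-1/8)*r^2*q^4*α^2) + ((-3/64)*r^2*q^4*c*γ + (1/16)*r^2*q^4*c*α))) + (((-1/128)*r^2*q^4*c^2 + ((63/128)*r^2*q^5*γ^2 + (-21/16)*r^2*q^5*α*γ)) + (((7/8)*r^2*q^5*α^2 + (21/64)*r^2*q^5*c*γ) + ((-7/16)*r^2*q^5*c*α + (7/128)*r^2*q^5*c^2)))) + ((((981/128)*r^3*γ^2 + ((-1/2)*r^3*β^2 + (-321/16)*r^3*α*γ)) + (((105/8)*r^3*α^2 + (1/2)*r^3*s*β) + ((-1/8)*r^3*s^2 + (303/64)*r^3*c*γ))) + (((-99/16)*r^3*c*α + ((93/128)*r^3*c^2 + (-171/64)*r^3*q*γ^2)) + (((3/2)*r^3*q*β^2 + 6*r^3*q*α*γ) + ((-13/4)*r^3*q*α^2 + (-3/2)*r^3*q*s*β))))) + (((((3/8)*r^3*q*s^2 + ((-21/32)*r^3*q*c*γ + (1/2)*r^3*q*c*α)) + (((5/64)*r^3*q*c^2 + (-9/128)*r^3*q^2*γ^2)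 + ((3/16)*r^3*q^2*α*γ + (-1/8)*r^3*q^2*α^2))) + (((-3/64)*r^3*q^2*c*γ + ((1/16)*r^3*q^2*c*α + (-1/128)*r^3*q^2*c^2)) + (((63/128)*r^3*q^3*γ^2 + (-21/16)*r^3*q^3*α*γ) + ((7/8)*r^3*q^3*α^2 + (21/64)*r^3*q^3*c*γ)))) + ((((-7/16)*r^3*q^3*c*α + ((7/128)*r^3*q^3*c^2 + (-9/128)*r^4*γ^2)) + (((3/16)*r^4*α*γ + (-1/8)*r^4*α^2) + ((-3/64)*r^4*c*γ + (1/16)*r^4*c*α))) + (((-1/128)*r^4*c^2 + ((63/128)*r^4*q*γ^2 + (-21/16)*r^4*q*α*γ)) + (((7/8)*r^4*q*α^2 + (21/64)*r^4*q*c*γ) + ((-7/16)*r^4*q*c*α + (7/128)*r^4*q*c^2)))))))) * hq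
end

section
/- Let φ ∈ (0, π/2], c = cos φ, s = sin φ, α, β, γ ∈ ℝ, and let ψ(t) = −1 + (1/64)(4(1−t⁴)α + 3(1−t²)²γ + (1 + 6t² + t⁴)c)² + (1/4)t²(2(1−t²)β + (1+t²)s)². Set u_1 = √(2(2+√2)) − 1 − √2, u_2 = √(2+√2) − 1, u_3 = 1 + √2 − √(2+√2), σ_1 = (1−u_1²)+(1−u_2²)+(1−u_3²), σ_2 = (1−u_1²)(1−u_2²)+(1−u_1²)(1−u_3²)+(1−u_2²)(1−u_3²), σ_3 = (1−u_1²)(1−u_2²)(1−u_3²). If ψ(u_1) = ψ(u_2) = ψ(u_3) = 0, then, with x = 4α − 3γ − c and y = 4α + 3γ + c, it holds that 0 = (−x/32 + c/8 + c³/8 − (σ_3/512)c x²)·y − (1/4)·(((σ_3/64)x² + (c/4)x − s²)² − (1/16)(1 − σ_2 + 2σ_3)c²x² + (1/16)(2 − σ_1)x² − c(x − 8c)). -/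
open Real
set_option maxRecDepth 100000
set_option maxHeartbeats 2000000

/-- Equation (5) of the paper: if the simplified error function of the quartic G⁰
interpolant vanishes at `u₁, u₂, u₃`, then with `x = 4α − 3γ − c`, `y = 4α + 3γ + c`,
`y` satisfies the stated linear equation with coefficients built from `σ₁, σ₂, σ₃`. -/
theorem stmt_12 (φ : ℝ) (hφ : φ ∈ Set.Ioc 0 (π / 2))
    (c s α β γ : ℝ) (hc : c = Real.cos φ) (hs : s = Real.sin φ)
    (ψ : ℝ → ℝ)
    (hψ : ∀ t, ψ t = -1
      + (1 / 64) * (4 * (1 - t ^ 4) * α + 3 * (1 - t ^ 2) ^ 2 * γ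
          + (1 + 6 * t ^ 2 + t ^ 4) * c) ^ 2
      + (1 / 4) * t ^ 2 * (2 * (1 - t ^ 2) * β + (1 + t ^ 2) * s) ^ 2)
    (u1 u2 u3 σ1 σ2 σ3 : ℝ)
    (hu1 : u1 = Real.sqrt (2 * (2 + Real.sqrt 2)) - 1 - Real.sqrt 2)
    (hu2 : u2 = Real.sqrt (2 + Real.sqrt 2) - 1)
    (hu3 : u3 = 1 + Real.sqrt 2 - Real.sqrt (2 + Real.sqrt 2))
    (hσ1 : σ1 = (1 - u1 ^ 2) + (1 - u2 ^ 2) + (1 - u3 ^ 2))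
    (hσ2 : σ2 = (1 - u1 ^ 2) * (1 - u2 ^ 2) + (1 - u1 ^ 2) * (1 - u3 ^ 2)
      + (1 - u2 ^ 2) * (1 - u3 ^ 2))
    (hσ3 : σ3 = (1 - u1 ^ 2) * (1 - u2 ^ 2) * (1 - u3 ^ 2))
    (h1 : ψ u1 = 0) (h2 : ψ u2 = 0) (h3 : ψ u3 = 0)
    (x y : ℝ) (hx : x = 4 * α - 3 * γ - c) (hy : y = 4 * α + 3 * γ + c) :
    0 = (-x / 32 + c / 8 + c ^ 3 / 8 - (σ3 / 512) * c * x ^ 2) * y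
      - (1 / 4) * (((σ3 / 64) * x ^ 2 + (c / 4) * x - s ^ 2) ^ 2
        - (1 / 16) * (1 - σ2 + 2 * σ3) * c ^ 2 * x ^ 2
        + (1 / 16) * (2 - σ1) * x ^ 2 - c * (x - 8 * c)) := by
  have hcs : s ^ 2 + c ^ 2 = 1 := by rw [hc, hs]; exact Real.sin_sq_add_cos_sq φ
  have hsq2 : Real.sqrt 2 ^ 2 = 2 := Real.sq_sqrt (by norm_num)
  set r := Real.sqrt (2 + Real.sqrt 2) with hrdef
  have hr2 : r ^ 2 = 2 + Real.sqrt 2 := Real.sq_sqrt (by positivity)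
  have hw : Real.sqrt 2 = r ^ 2 - 2 := by linarith
  have hr4 : r ^ 4 = 4 * r ^ 2 - 2 := by
    have h : r ^ 4 = (2 + Real.sqrt 2) ^ 2 := by rw [← hr2]; ring
    linear_combination h + hsq2 - 4 * hr2
  have h21 : Real.sqrt (2 * (2 + Real.sqrt 2)) = Real.sqrt 2 * r := by
    rw [show (2:ℝ) * (2 + Real.sqrt 2) = (Real.sqrt 2 * r) ^ 2 by rw [mul_pow, hsq2, hr2],
      Real.sqrt_sq (by positivity)]
  have hu1' : u1 = r ^ 3 - r ^ 2 - 2 * r + 1 := by rw [hu1, h21, hw]; ring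
  have hu2' : u2 = r - 1 := hu2
  have hu3' : u3 = r ^ 2 - r - 1 := by rw [hu3, hw]; ring
  have hσ1' : σ1 = ((4) + (-8) * r ^ 2 + (4) * r ^ 3) := by
    rw [hσ1, hu1', hu2', hu3']; linear_combination ((-2) + (2) * r + (-1) * r ^ 2) * hr4
  have hσ2' : σ2 = ((-74) + (40) * r + (126) * r ^ 2 + (-68) * r ^ 3) := by
    rw [hσ2, hu1', hu2', hu3']; linear_combination ((37) + (-20) * r + (9) * r ^ 2 + (-4) * r ^ 3 + (5) * r ^ 4 + (-4) * r ^ 5 + (1) * r ^ 6) * hr4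
  have hσ3' : σ3 = ((308) + (-168) * r + (-524) * r ^ 2 + (284) * r ^ 3) := by
    rw [hσ3, hu1', hu2', hu3']; linear_combination ((-154) + (84) * r + (-46) * r ^ 2 + (18) * r ^ 3 + (-3) * r ^ 4 + (8) * r ^ 5 + (-12) * r ^ 6 + (6) * r ^ 7 + (-1) * r ^ 8) * hr4
  rw [hψ] at h1 h2 h3
  rw [hu1'] at h1
  rw [hu2'] at h2
  rw [hu3'] at h3
  have hE1 : ((-1) + (-448) * s ^ 2 + ((-4039)/(4)) * c ^ 2 + ((-9051)/(2)) * γ * c + ((-20223)/(4)) * γ ^ 2 + (1664) * β * s + (-1540) * β ^ 2 + (6528) * α * c + (14592) * α * γ + (-10528) * α ^ 2 + (240) * r * s ^ 2 + (544) * r * c ^ 2 + (2448) * r * γ * c + (2736) * r * γ ^ 2 + (-896) * r * β * s + (832) * r * β ^ 2 + (-3528) * r * α * c + (-7896) * r * α * γ + (5696) * r * α ^ 2 + (770) * r ^ 2 * s ^ 2 + (1729) * r ^ 2 * c ^ 2 + (7728) * r ^ 2 * γ * c + (8631) * r ^ 2 * γ ^ 2 + (-2848) * r ^ 2 * β * s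 + (2632) * r ^ 2 * β ^ 2 + (-11152) * r ^ 2 * α * c + (-24912) * r ^ 2 * α * γ + (17976) * r ^ 2 * α ^ 2 + (-416) * r ^ 3 * s ^ 2 + (-935) * r ^ 3 * c ^ 2 + (-4182) * r ^ 3 * γ * c + (-4671) * r ^ 3 * γ ^ 2 + (1540) * r ^ 3 * β * s + (-1424) * r ^ 3 * β ^ 2 + (6034) * r ^ 3 * α * c + (13482) * r ^ 3 * α * γ + (-9728) * r ^ 3 * α ^ 2) = 0 := by
    linear_combination h1 + (((-449)/(2)) * s ^ 2 + ((-4043)/(8)) * c ^ 2 + ((-9051)/(4)) * γ * c + ((-20223)/(8)) * γ ^ 2 + (832) * β * s + (-770) * β ^ 2 + (3264) * α * c + (7296) * α * γ + (-5264) * α ^ 2 + (124) * r * s ^ 2 + (276) * r * c ^ 2 + (1224) * r * γ * c + (1368) * r * γ ^ 2 + (-452) * r * β * s + (416) * r * β ^ 2 + (-1768) * r * α * c + (-3948) * r * α * γ + (2848) * r * α ^ 2 + (-76) * r ^ 2 * s ^ 2 + ((-633)/(4)) * r ^ 2 * c ^ 2 + ((-1335)/(2)) * r ^ 2 * γ *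 c + ((-2961)/(4)) * r ^ 2 * γ ^ 2 + (266) * r ^ 2 * β * s + (-232) * r ^ 2 * β ^ 2 + (978) * r ^ 2 * α * c + (2136) * r ^ 2 * α * γ + (-1548) * r ^ 2 * α ^ 2 + (52) * r ^ 3 * s ^ 2 + ((193)/(2)) * r ^ 3 * c ^ 2 + (387) * r ^ 3 * γ * c + ((801)/(2)) * r ^ 3 * γ ^ 2 + (-184) * r ^ 3 * β * s + (160) * r ^ 3 * β ^ 2 + (-577) * r ^ 3 * α * c + (-1179) * r ^ 3 * α * γ + (872) * r ^ 3 * α ^ 2 + ((-85)/(4)) * r ^ 4 * s ^ 2 + ((-757)/(16)) * r ^ 4 * c ^ 2 + ((-1881)/(8)) * r ^ 4 * γ * c + ((-3753)/(16)) * r ^ 4 * γ ^ 2 + (95) * r ^ 4 * β * s + (-105) * r ^ 4 * β ^ 2 + (331) * r ^ 4 * α * c + (708) * r ^ 4 * α * γ + (-522) * r ^ 4 * α ^ 2 + (-16) * r ^ 5 * s ^ 2 + (1) * r ^ 5 * c ^ 2 + (78) * r ^ 5 * γ * c + (153) * r ^ 5 * γ ^ 2 + (48) * r ^ 5 * β *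 s + (-32) * r ^ 5 * β ^ 2 + (-82) * r ^ 5 * α * c + (-390) * r ^ 5 * α * γ + (240) * r ^ 5 * α ^ 2 + ((45)/(2)) * r ^ 6 * s ^ 2 + ((41)/(2)) * r ^ 6 * c ^ 2 + ((123)/(2)) * r ^ 6 * γ * c + (-18) * r ^ 6 * γ ^ 2 + (-94) * r ^ 6 * β * s + (98) * r ^ 6 * β ^ 2 + (-103) * r ^ 6 * α * c + (-27) * r ^ 6 * α * γ + (66) * r ^ 6 * α ^ 2 + ((27)/(2)) * r ^ 7 * s ^ 2 + ((9)/(4)) * r ^ 7 * c ^ 2 + (-39) * r ^ 7 * γ * c + ((-405)/(4)) * r ^ 7 * γ ^ 2 + (-46) * r ^ 7 * β * s + (38) * r ^ 7 * β ^ 2 + ((71)/(2)) * r ^ 7 * α * c + ((489)/(2)) * r ^ 7 * α * γ + (-142) * r ^ 7 * α ^ 2 + (-32) * r ^ 8 * s ^ 2 + ((-1155)/(32)) * r ^ 8 * c ^ 2 + ((-1881)/(16)) * r ^ 8 * γ * c + ((-1179)/(32)) * r ^ 8 * γ ^ 2 + (126) * r ^ 8 * β * s + (-124) * r ^ 8 *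 β ^ 2 + ((379)/(2)) * r ^ 8 * α * c + ((381)/(2)) * r ^ 8 * α * γ + ((-379)/(2)) * r ^ 8 * α ^ 2 + ((13)/(2)) * r ^ 9 * s ^ 2 + ((63)/(2)) * r ^ 9 * c ^ 2 + ((339)/(2)) * r ^ 9 * γ * c + (225) * r ^ 9 * γ ^ 2 + (-26) * r ^ 9 * β * s + (26) * r ^ 9 * β ^ 2 + ((-465)/(2)) * r ^ 9 * α * c + ((-1239)/(2)) * r ^ 9 * α * γ + (426) * r ^ 9 * α ^ 2 + ((49)/(4)) * r ^ 10 * s ^ 2 + ((69)/(16)) * r ^ 10 * c ^ 2 + ((-87)/(8)) * r ^ 10 * γ * c + ((-1143)/(16)) * r ^ 10 * γ ^ 2 + (-49) * r ^ 10 * β * s + (49) * r ^ 10 * β ^ 2 + ((9)/(4)) * r ^ 10 * α * c + ((615)/(4)) * r ^ 10 * α * γ + (-78) * r ^ 10 * α ^ 2 + ((-11)/(2)) * r ^ 11 * s ^ 2 + ((-195)/(8)) * r ^ 11 * c ^ 2 + ((-519)/(4)) * r ^ 11 * γ * c + ((-1359)/(8)) * r ^ 11 * γ ^ 2 + (22)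 * r ^ 11 * β * s + (-22) * r ^ 11 * β ^ 2 + ((357)/(2)) * r ^ 11 * α * c + ((939)/(2)) * r ^ 11 * α * γ + (-324) * r ^ 11 * α ^ 2 + ((-7)/(4)) * r ^ 12 * s ^ 2 + ((631)/(64)) * r ^ 12 * c ^ 2 + ((2061)/(32)) * r ^ 12 * γ * c + ((6687)/(64)) * r ^ 12 * γ ^ 2 + (7) * r ^ 12 * β * s + (-7) * r ^ 12 * β ^ 2 + ((-673)/(8)) * r ^ 12 * α * c + ((-2187)/(8)) * r ^ 12 * α * γ + ((715)/(4)) * r ^ 12 * α ^ 2 + ((3)/(2)) * r ^ 13 * s ^ 2 + (9) * r ^ 13 * c ^ 2 + ((99)/(2)) * r ^ 13 * γ * c + ((135)/(2)) * r ^ 13 * γ ^ 2 + (-6) * r ^ 13 * β * s + (6) * r ^ 13 * β ^ 2 + ((-135)/(2)) * r ^ 13 * α * c + ((-369)/(2)) * r ^ 13 * α * γ + (126) * r ^ 13 * α ^ 2 + ((-1)/(4)) * r ^ 14 * s ^ 2 + ((-127)/(16)) * r ^ 14 * c ^ 2 + ((-375)/(8)) * r ^ 14 * γ * c + ((-1107)/(16))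 * r ^ 14 * γ ^ 2 + (1) * r ^ 14 * β * s + (-1) * r ^ 14 * β ^ 2 + ((251)/(4)) * r ^ 14 * α * c + ((741)/(4)) * r ^ 14 * α * γ + (-124) * r ^ 14 * α ^ 2 + ((-1)/(2)) * r ^ 15 * c ^ 2 + (-3) * r ^ 15 * γ * c + ((-9)/(2)) * r ^ 15 * γ ^ 2 + (4) * r ^ 15 * α * c + (12) * r ^ 15 * α * γ + (-8) * r ^ 15 * α ^ 2 + ((37)/(16)) * r ^ 16 * c ^ 2 + ((111)/(8)) * r ^ 16 * γ * c + ((333)/(16)) * r ^ 16 * γ ^ 2 + ((-37)/(2)) * r ^ 16 * α * c + ((-111)/(2)) * r ^ 16 * α * γ + (37) * r ^ 16 * α ^ 2 + ((-1)/(2)) * r ^ 17 * c ^ 2 + (-3) * r ^ 17 * γ * c + ((-9)/(2)) * r ^ 17 * γ ^ 2 + (4) * r ^ 17 * α * c + (12) * r ^ 17 * α * γ + (-8) * r ^ 17 * α ^ 2 + ((-1)/(4)) * r ^ 18 * c ^ 2 + ((-3)/(2)) * r ^ 18 * γ * c + ((-9)/(4)) * r ^ 18 * γ ^ 2 + (2)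 * r ^ 18 * α * c + (6) * r ^ 18 * α * γ + (-4) * r ^ 18 * α ^ 2 + ((1)/(8)) * r ^ 19 * c ^ 2 + ((3)/(4)) * r ^ 19 * γ * c + ((9)/(8)) * r ^ 19 * γ ^ 2 + (-1) * r ^ 19 * α * c + (-3) * r ^ 19 * α * γ + (2) * r ^ 19 * α ^ 2 + ((-1)/(64)) * r ^ 20 * c ^ 2 + ((-3)/(32)) * r ^ 20 * γ * c + ((-9)/(64)) * r ^ 20 * γ ^ 2 + ((1)/(8)) * r ^ 20 * α * c + ((3)/(8)) * r ^ 20 * α * γ + ((-1)/(4)) * r ^ 20 * α ^ 2) * hr4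
  have hE2 : ((-1) + ((-19)/(2)) * s ^ 2 + ((-215)/(16)) * c ^ 2 + ((-393)/(8)) * γ * c + ((-567)/(16)) * γ ^ 2 + (38) * β * s + (-34) * β ^ 2 + ((155)/(2)) * α * c + ((237)/(2)) * α * γ + (-97) * α ^ 2 + (-1) * r * s ^ 2 + (1) * r * c ^ 2 + (21) * r * γ * c + (18) * r * γ ^ 2 + (-8) * r * β * s + (12) * r * β ^ 2 + (-27) * r * α * c + (-57) * r * α * γ + (44) * r * α ^ 2 + ((55)/(2)) * r ^ 2 * s ^ 2 + ((69)/(2)) * r ^ 2 * c ^ 2 + ((189)/(2)) * r ^ 2 * γ * c + (63) * r ^ 2 * γ ^ 2 + (-88) * r ^ 2 * β * s + (70) * r ^ 2 * β ^ 2 + ((-319)/(2)) * r ^ 2 * α * c + ((-429)/(2)) * r ^ 2 * α * γ + (182) * r ^ 2 * α ^ 2 + (-13) * r ^ 3 * s ^ 2 + ((-67)/(4)) * r ^ 3 * c ^ 2 + ((-99)/(2)) * r ^ 3 * γ * c + ((-135)/(4)) * r ^ 3 * γ ^ 2 + (44) * r ^ 3 * β * s + (-36) * r ^ 3 * β ^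 2 + (82) * r ^ 3 * α * c + (114) * r ^ 3 * α * γ + (-96) * r ^ 3 * α ^ 2) = 0 := by
    linear_combination h2 + (((-21)/(4)) * s ^ 2 + ((-231)/(32)) * c ^ 2 + ((-393)/(16)) * γ * c + ((-567)/(32)) * γ ^ 2 + (19) * β * s + (-17) * β ^ 2 + ((155)/(4)) * α * c + ((237)/(4)) * α * γ + ((-97)/(2)) * α ^ 2 + ((3)/(2)) * r * s ^ 2 + ((5)/(2)) * r * c ^ 2 + ((21)/(2)) * r * γ * c + (9) * r * γ ^ 2 + (-6) * r * β * s + (6) * r * β ^ 2 + ((-31)/(2)) * r * α * c + ((-57)/(2)) * r * α * γ + (22) * r * α ^ 2 + ((-1)/(4)) * r ^ 2 * s ^ 2 + ((-11)/(16)) * r ^ 2 * c ^ 2 + ((-27)/(8)) * r ^ 2 * γ * c + ((-63)/(16)) * r ^ 2 * γ ^ 2 + (1) * r ^ 2 * β * s + (-1) * r ^ 2 * β ^ 2 + ((19)/(4)) * r ^ 2 * α * c + ((45)/(4)) * r ^ 2 * α * γ + (-8) * r ^ 2 * α ^ 2 + ((1)/(8)) * r ^ 3 * c ^ 2 + ((3)/(4))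 * r ^ 3 * γ * c + ((9)/(8)) * r ^ 3 * γ ^ 2 + (-1) * r ^ 3 * α * c + (-3) * r ^ 3 * α * γ + (2) * r ^ 3 * α ^ 2 + ((-1)/(64)) * r ^ 4 * c ^ 2 + ((-3)/(32)) * r ^ 4 * γ * c + ((-9)/(64)) * r ^ 4 * γ ^ 2 + ((1)/(8)) * r ^ 4 * α * c + ((3)/(8)) * r ^ 4 * α * γ + ((-1)/(4)) * r ^ 4 * α ^ 2) * hr4
  have hE3 : ((-1) + ((-343)/(2)) * s ^ 2 + ((-4991)/(16)) * c ^ 2 + ((-10065)/(8)) * γ * c + ((-20223)/(16)) * γ ^ 2 + (618) * β * s + (-554) * β ^ 2 + ((3745)/(2)) * α * c + ((7527)/(2)) * α * γ + (-2801) * α ^ 2 + (95) * r * s ^ 2 + (171) * r * c ^ 2 + (681) * r * γ * c + (684) * r * γ ^ 2 + (-336) * r * β * s + (300) * r * β ^ 2 + (-1015) * r * α * c + (-2037) * r * α * γ + (1516) * r * α ^ 2 + ((589)/(2)) * r ^ 2 * s ^ 2 + ((2137)/(4)) * r ^ 2 * c ^ 2 + (2148) * r ^ 2 * γ * c + ((8631)/(4))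 * r ^ 2 * γ ^ 2 + (-1056) * r ^ 2 * β * s + (946) * r ^ 2 * β ^ 2 + ((-6395)/(2)) * r ^ 2 * α * c + ((-12849)/(2)) * r ^ 2 * α * γ + (4782) * r ^ 2 * α ^ 2 + (-160) * r ^ 3 * s ^ 2 + ((-1159)/(4)) * r ^ 3 * c ^ 2 + ((-2325)/(2)) * r ^ 3 * γ * c + ((-4671)/(4)) * r ^ 3 * γ ^ 2 + (572) * r ^ 3 * β * s + (-512) * r ^ 3 * β ^ 2 + (1731) * r ^ 3 * α * c + (3477) * r ^ 3 * α * γ + (-2588) * r ^ 3 * α ^ 2) = 0 := by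
    linear_combination h3 + (((-345)/(4)) * s ^ 2 + ((-5007)/(32)) * c ^ 2 + ((-10065)/(16)) * γ * c + ((-20223)/(32)) * γ ^ 2 + (309) * β * s + (-277) * β ^ 2 + ((3745)/(4)) * α * c + ((7527)/(4)) * α * γ + ((-2801)/(2)) * α ^ 2 + ((91)/(2)) * r * s ^ 2 + ((167)/(2)) * r * c ^ 2 + ((681)/(2)) * r * γ * c + (342) * r * γ ^ 2 + (-166) * r * β * s + (150) * r * β ^ 2 + ((-1011)/(2)) * r * α * c + ((-2037)/(2)) * r * α * γ + (758) * r * α ^ 2 + ((-107)/(4)) * r ^ 2 * s ^ 2 + ((-757)/(16)) * r ^ 2 * c ^ 2 + ((-1485)/(8)) * r ^ 2 * γ * c + ((-2961)/(16)) * r ^ 2 * γ ^ 2 + (95) * r ^ 2 * β * s + (-83) * r ^ 2 * β ^ 2 + ((1115)/(4)) * r ^ 2 * α * c + ((2205)/(4)) * r ^ 2 * α * γ + (-412) * r ^ 2 * α ^ 2 + ((29)/(2)) * r ^ 3 * s ^ 2 + ((205)/(8)) * r ^ 3 * c ^ 2 + ((393)/(4)) * r ^ 3 * γ * c + ((801)/(8))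 * r ^ 3 * γ ^ 2 + (-50) * r ^ 3 * β * s + (42) * r ^ 3 * β ^ 2 + ((-297)/(2)) * r ^ 3 * α * c + ((-591)/(2)) * r ^ 3 * α * γ + (220) * r ^ 3 * α ^ 2 + ((-11)/(2)) * r ^ 4 * s ^ 2 + ((-745)/(64)) * r ^ 4 * c ^ 2 + ((-1611)/(32)) * r ^ 4 * γ * c + ((-3537)/(64)) * r ^ 4 * γ ^ 2 + (20) * r ^ 4 * β * s + (-18) * r ^ 4 * β ^ 2 + ((587)/(8)) * r ^ 4 * α * c + ((1281)/(8)) * r ^ 4 * α * γ + ((-465)/(4)) * r ^ 4 * α ^ 2 + ((7)/(2)) * r ^ 5 * s ^ 2 + (7) * r ^ 5 * c ^ 2 + ((63)/(2)) * r ^ 5 * γ * c + ((63)/(2)) * r ^ 5 * γ ^ 2 + (-14) * r ^ 5 * β * s + (14) * r ^ 5 * β ^ 2 + ((-91)/(2)) * r ^ 5 * α * c + ((-189)/(2)) * r ^ 5 * α * γ + (70) * r ^ 5 * α ^ 2 + ((-13)/(4)) * r ^ 6 * s ^ 2 + ((-79)/(16)) * r ^ 6 * c ^ 2 + ((-159)/(8))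 * r ^ 6 * γ * c + ((-243)/(16)) * r ^ 6 * γ ^ 2 + (13) * r ^ 6 * β * s + (-13) * r ^ 6 * β ^ 2 + ((119)/(4)) * r ^ 6 * α * c + ((201)/(4)) * r ^ 6 * α * γ + (-40) * r ^ 6 * α ^ 2 + ((3)/(2)) * r ^ 7 * s ^ 2 + (2) * r ^ 7 * c ^ 2 + ((15)/(2)) * r ^ 7 * γ * c + ((9)/(2)) * r ^ 7 * γ ^ 2 + (-6) * r ^ 7 * β * s + (6) * r ^ 7 * β ^ 2 + ((-23)/(2)) * r ^ 7 * α * c + ((-33)/(2)) * r ^ 7 * α * γ + (14) * r ^ 7 * α ^ 2 + ((-1)/(4)) * r ^ 8 * s ^ 2 + ((-9)/(16)) * r ^ 8 * c ^ 2 + ((-21)/(8)) * r ^ 8 * γ * c + ((-45)/(16)) * r ^ 8 * γ ^ 2 + (1) * r ^ 8 * β * s + (-1) * r ^ 8 * β ^ 2 + ((15)/(4)) * r ^ 8 * α * c + ((33)/(4)) * r ^ 8 * α * γ + (-6) * r ^ 8 * α ^ 2 + ((1)/(2)) * r ^ 9 * c ^ 2 + (3) * r ^ 9 * γ * c + ((9)/(2))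 * r ^ 9 * γ ^ 2 + (-4) * r ^ 9 * α * c + (-12) * r ^ 9 * α * γ + (8) * r ^ 9 * α ^ 2 + ((-3)/(8)) * r ^ 10 * c ^ 2 + ((-9)/(4)) * r ^ 10 * γ * c + ((-27)/(8)) * r ^ 10 * γ ^ 2 + (3) * r ^ 10 * α * c + (9) * r ^ 10 * α * γ + (-6) * r ^ 10 * α ^ 2 + ((1)/(8)) * r ^ 11 * c ^ 2 + ((3)/(4)) * r ^ 11 * γ * c + ((9)/(8)) * r ^ 11 * γ ^ 2 + (-1) * r ^ 11 * α * c + (-3) * r ^ 11 * α * γ + (2) * r ^ 11 * α ^ 2 + ((-1)/(64)) * r ^ 12 * c ^ 2 + ((-3)/(32)) * r ^ 12 * γ * c + ((-9)/(64)) * r ^ 12 * γ ^ 2 + ((1)/(8)) * r ^ 12 * α * c + ((3)/(8)) * r ^ 12 * α * γ + ((-1)/(4)) * r ^ 12 * α ^ 2) * hr4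
  have hA0 : ((-2) * s ^ 2 + ((45)/(16)) * c ^ 2 + ((231)/(8)) * γ * c + ((693)/(16)) * γ ^ 2 + (2) * β * s + ((-73)/(2)) * α * c + ((-231)/(2)) * α * γ + (77) * α ^ 2 + ((-21)/(8)) * r * c ^ 2 + ((-63)/(4)) * r * γ * c + ((-189)/(8)) * r * γ ^ 2 + (21) * r * α * c + (63) * r * α * γ + (-42) * r * α ^ 2 + ((-131)/(16)) * r ^ 2 * c ^ 2 + ((-393)/(8)) * r ^ 2 * γ * c + ((-1179)/(16)) * r ^ 2 * γ ^ 2 + ((131)/(2)) * r ^ 2 * α * c + ((393)/(2)) * r ^ 2 * α * γ + (-131) * r ^ 2 * α ^ 2 + ((71)/(16)) * r ^ 3 * c ^ 2 + ((213)/(8)) * r ^ 3 * γ * c + ((639)/(16)) * r ^ 3 * γ ^ 2 + ((-71)/(2)) * r ^ 3 * α * c + ((-213)/(2)) * r ^ 3 * α * γ + (71) * r ^ 3 * α ^ 2) = 0 := by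
    linear_combination (((1)/(2)) + (2) * r + ((-1)/(2)) * r ^ 3) * hE1 + ((-1) + (-1) * r + ((3)/(2)) * r ^ 2 + (1) * r ^ 3) * hE2 + ((-1) * r + ((-1)/(2)) * r ^ 2) * hE3 + (((425)/(2)) + (594) * r + (-815) * r ^ 2 + ((-2377)/(2)) * r ^ 3 + (886) * r ^ 4 + (297) * r ^ 5 + (-195) * r ^ 6) * hcs + ((106) + ((1127)/(8)) * c ^ 2 + ((4485)/(4)) * γ * c + ((10143)/(8)) * γ ^ 2 + (-396) * β * s + (368) * β ^ 2 + ((-3223)/(2)) * α * c + ((-7293)/(2)) * α * γ + (2622) * α ^ 2 + (297) * r + ((1653)/(4)) * r * c ^ 2 + ((6525)/(2)) * r * γ * c + ((14877)/(4)) * r * γ ^ 2 + (-1116) * r * β * s + (1044) * r * β ^ 2 + (-4674) * r * α * c + (-10674) * r * α * γ + (7656) * r * α ^ 2 + (-195) * r ^ 2 + ((-1023)/(4)) * r ^ 2 * c ^ 2 + ((-4083)/(2)) * r ^ 2 * γ * c + ((-9207)/(4)) * r ^ 2 * γ ^ 2 + (726) * r ^ 2 * β * s + (-676) * r ^ 2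 * β ^ 2 + (2935) * r ^ 2 * α * c + (6627) * r ^ 2 * α * γ + (-4768) * r ^ 2 * α ^ 2) * hr4
  have hA1 : (((5)/(4)) * s ^ 2 + ((77)/(32)) * c ^ 2 + ((123)/(16)) * γ * c + ((333)/(32)) * γ ^ 2 + (-3) * β * s + (1) * β ^ 2 + ((-49)/(4)) * α * c + ((-111)/(4)) * α * γ + ((39)/(2)) * α ^ 2 + ((-5)/(8)) * r * c ^ 2 + ((-15)/(4)) * r * γ * c + ((-45)/(8)) * r * γ ^ 2 + (5) * r * α * c + (15) * r * α * γ + (-10) * r * α ^ 2 + ((-63)/(32)) * r ^ 2 * c ^ 2 + ((-189)/(16)) * r ^ 2 * γ * c + ((-567)/(32)) * r ^ 2 * γ ^ 2 + ((63)/(4)) * r ^ 2 * α * c + ((189)/(4)) * r ^ 2 * α * γ + ((-63)/(2)) * r ^ 2 * α ^ 2 + ((17)/(16)) * r ^ 3 * c ^ 2 + ((51)/(8)) * r ^ 3 * γ * c + ((153)/(16)) * r ^ 3 * γ ^ 2 + ((-17)/(2)) * r ^ 3 * α * c + ((-51)/(2)) * r ^ 3 * α * γ + (17) * r ^ 3 *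 α ^ 2) = 0 := by
    linear_combination (((5)/(2)) + (2) * r + ((-3)/(2)) * r ^ 2 + (-1) * r ^ 3) * hE1 + ((2) + (1) * r + ((-15)/(4)) * r ^ 2 + (-2) * r ^ 3) * hE2 + (((1)/(2)) + (1) * r + ((9)/(4)) * r ^ 2 + (1) * r ^ 3) * hE3 + ((1226) + ((863)/(2)) * r + (-3023) * r ^ 2 + (-869) * r ^ 3 + ((3487)/(2)) * r ^ 4 + ((871)/(4)) * r ^ 5 + (-282) * r ^ 6) * hcs + (((1231)/(2)) + ((11869)/(16)) * c ^ 2 + ((48195)/(8)) * γ * c + ((106821)/(16)) * γ ^ 2 + (-2274) * β * s + (2098) * β ^ 2 + ((-34847)/(4)) * α * c + ((-77253)/(4)) * α * γ + (13967) * α ^ 2 + ((871)/(4)) * r + ((1861)/(8)) * r * c ^ 2 + (1926) * r * γ * c + ((16749)/(8)) * r * γ ^ 2 + (-780) * r * β * s + (707) * r * β ^ 2 + ((-11239)/(4)) * r * α * c + ((-24357)/(4)) * r * α * γ + (4429) * r * α ^ 2 + (-282) * r ^ 2 + ((-1587)/(4)) * r ^ 2 * c ^ 2 + ((-6237)/(2))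 * r ^ 2 * γ * c + ((-14283)/(4)) * r ^ 2 * γ ^ 2 + (1056) * r ^ 2 * β * s + (-984) * r ^ 2 * β ^ 2 + (4467) * r ^ 2 * α * c + (10233) * r ^ 2 * α * γ + (-7332) * r ^ 2 * α ^ 2) * hr4
  have hA2 : (((-1)/(4)) * s ^ 2 + ((-3)/(16)) * c ^ 2 + ((-3)/(8)) * γ * c + ((9)/(16)) * γ ^ 2 + (1) * β * s + (-1) * β ^ 2 + ((3)/(4)) * α * c + ((-3)/(4)) * α * γ + ((-1)/(8)) * r ^ 2 * c ^ 2 + ((-3)/(4)) * r ^ 2 * γ * c + ((-9)/(8)) * r ^ 2 * γ ^ 2 + (1) * r ^ 2 * α * c + (3) * r ^ 2 * α * γ + (-2) * r ^ 2 * α ^ 2 + ((1)/(16)) * r ^ 3 * c ^ 2 + ((3)/(8)) * r ^ 3 * γ * c + ((9)/(16)) * r ^ 3 * γ ^ 2 + ((-1)/(2)) * r ^ 3 * α * c + ((-3)/(2)) * r ^ 3 * α * γ + (1) * r ^ 3 * α ^ 2) = 0 := by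
    linear_combination (((-13)/(4)) + ((-9)/(2)) * r + ((7)/(4)) * r ^ 2 + ((7)/(4)) * r ^ 3) * hE1 + (((-1)/(4)) + (1) * r + (2) * r ^ 2 + ((3)/(4)) * r ^ 3) * hE2 + (((1)/(4)) + (-1) * r + (-2) * r ^ 2 + ((-3)/(4)) * r ^ 3) * hE3 + (((-5663)/(4)) + (-1422) * r + ((16287)/(4)) * r ^ 2 + ((11405)/(4)) * r ^ 3 + ((-6361)/(2)) * r ^ 4 + ((-2853)/(4)) * r ^ 5 + ((2471)/(4)) * r ^ 6) * hcs + (((-1419)/(2)) + ((-3583)/(4)) * c ^ 2 + (-7203) * γ * c + ((-32247)/(4)) * γ ^ 2 + (2632) * β * s + (-2438) * β ^ 2 + (10384) * α * c + (23256) * α * γ + (-16770) * α ^ 2 + ((-2853)/(4)) * r + ((-13559)/(16)) * r * c ^ 2 + ((-55131)/(8)) * r * γ * c + ((-122031)/(16)) * r * γ ^ 2 + (2619) * r * β * s + (-2409) * r * β ^ 2 + (9976) * r * α * c + (22071) * r * α * γ + (-15968) * r * α ^ 2 + ((2471)/(4)) * r ^ 2 + ((3255)/(4)) * r ^ 2 *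 c ^ 2 + ((25935)/(4)) * r ^ 2 * γ * c + ((29295)/(4)) * r ^ 2 * γ ^ 2 + (-2299) * r ^ 2 * β * s + (2135) * r ^ 2 * β ^ 2 + ((-37291)/(4)) * r ^ 2 * α * c + ((-84285)/(4)) * r ^ 2 * α * γ + (15155) * r ^ 2 * α ^ 2) * hr4
  subst hx hy
  rw [hσ1', hσ2', hσ3']
  linear_combination (((-19)/(64)) * c ^ 2 + ((231)/(32)) * γ * c + ((693)/(64)) * γ ^ 2 + ((-1)/(2)) * β * s + ((-73)/(8)) * α * c + ((-231)/(8)) * α * γ + ((77)/(4)) * α ^ 2 + ((-21)/(32)) * r * c ^ 2 + ((-63)/(16)) * r * γ * c + ((-189)/(32)) * r * γ ^ 2 + ((21)/(4)) * r * α * c + ((63)/(4)) * r * α * γ + ((-21)/(2)) * r * α ^ 2 + ((-131)/(64)) * r ^ 2 * c ^ 2 + ((-393)/(32)) * r ^ 2 * γ * c + ((-1179)/(64)) * r ^ 2 * γ ^ 2 + ((131)/(8)) * r ^ 2 * α * c + ((393)/(8)) * r ^ 2 * α * γ + ((-131)/(4)) * r ^ 2 * α ^ 2 + ((71)/(64))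 * r ^ 3 * c ^ 2 + ((213)/(32)) * r ^ 3 * γ * c + ((639)/(64)) * r ^ 3 * γ ^ 2 + ((-71)/(8)) * r ^ 3 * α * c + ((-213)/(8)) * r ^ 3 * α * γ + ((71)/(4)) * r ^ 3 * α ^ 2) * hA0 + ((-1) * c ^ 2) * hA1 + ((-1) * s ^ 2 + (-1) * c ^ 2) * hA2 + (((-33)/(16)) * c ^ 2 + ((9)/(16)) * γ ^ 2 + ((5)/(4)) * α * c + ((-3)/(4)) * α * γ + ((-1)/(8)) * r ^ 2 * c ^ 2 + ((-3)/(4)) * r ^ 2 * γ * c + ((-9)/(8)) * r ^ 2 * γ ^ 2 + (1) * r ^ 2 * α * c + (3) * r ^ 2 * α * γ + (-2) * r ^ 2 * α ^ 2 + ((1)/(16)) * r ^ 3 * c ^ 2 + ((3)/(8)) * r ^ 3 * γ * c + ((9)/(16)) * r ^ 3 * γ ^ 2 + ((-1)/(2)) * r ^ 3 * α * c + ((-3)/(2)) * r ^ 3 * α * γ + (1) * r ^ 3 * α ^ 2) * hcs + (0:ℝ) * hr4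
end
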